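/- arXiv:2306.06011 — 7 statements merged into one kernel-verified Lean document; each statement's English description precedes it below -/
import Mathlib

section
/- Let k be a field, let f(x) = f_n x^n + … + f_1 x + f_0 ∈ k[x] be a separable polynomial of degree n with f_n ≠ 0, let L = k[x]/(f) = k[θ], and fix a unit ξ ∈ L^×. Define quadratic forms Q_0, …, Q_{n−1} ∈ k[u_0,…,u_{n−1}] by the identity ξ(u_0 + u_1θ + … + u_{n−1}θ^{n−1})² = Σ_{j=0}^{n−1} Q_j(u_0,…,u_{n−1}) θ^j in L[u_0,…,u_{n−1}]. Let 𝐆 be the n×n matrix with (i,j) entry Tr_{L/k}(f_n ξ θ^{i+j}/f'(θ)) (indices 0 ≤ i,j ≤ n−1) and 𝐇 = 𝐆Θ where Θ is the matrix of multiplication by θ on L in the power basis 1, θ, …, θ^{n−1}. Then 𝐆 and 𝐇 are symmetric, 𝐆 is invertible, and for all 0 ≤ j ≤ n−1, Q_j(u_0,…,u_{n−1}) = f_n^{−1} Σ_{i=j+1}^{n} f_i · 𝐮^T 𝐆 (𝐆^{−1}𝐇)^{i−j−1} 𝐮, where 𝐮 = (u_0,…,u_{n−1})^T. -/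
open Polynomial Matrix
open Finset

lemma euler_sum {K : Type*} [Field K] {n : ℕ} {r : Fin n → K} (hr : Function.Injective r)
    {m : ℕ} (hm : m < n) :
    ∑ t : Fin n, r t ^ m * (∏ s ∈ Finset.univ.erase t, (r t - r s))⁻¹
      = if m = n - 1 then 1 else 0 := by
  have hvs : Set.InjOn r (Finset.univ : Finset (Fin n)) := hr.injOn
  have hcard : (#(Finset.univ : Finset (Fin n)) : ℕ) = n := by simp
  have hlt : (X ^ m : K[X]).degree < #(Finset.univ : Finset (Fin n)) := by
    rw [degree_X_pow, hcard]; exact_mod_cast hm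
  have h := Lagrange.eq_interpolate (v := r) hvs hlt
  have h2 := congrArg (fun p : K[X] => p.coeff (n - 1)) h
  simp only [Lagrange.interpolate_apply, Polynomial.finset_sum_coeff, coeff_C_mul,
    eval_pow, eval_X, coeff_X_pow] at h2
  have hbasis : ∀ t : Fin n, (Lagrange.basis Finset.univ r t).coeff (n - 1)
      = (∏ s ∈ Finset.univ.erase t, (r t - r s))⁻¹ := by
    intro t
    have hnd : (Lagrange.basis Finset.univ r t).natDegree = n - 1 := by
      rw [Lagrange.natDegree_basis hvs (mem_univ t), hcard]
    rw [← hnd, coeff_natDegree, Lagrange.basis, leadingCoeff_prod]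
    rw [← Finset.prod_inv_distrib]
    refine Finset.prod_congr rfl fun s hs => ?_
    have hne : r t - r s ≠ 0 := sub_ne_zero_of_ne (fun hc => (mem_erase.mp hs).1.symm (hr hc))
    rw [Lagrange.basisDivisor, leadingCoeff_mul, leadingCoeff_C,
      (monic_X_sub_C (r s)).leadingCoeff, mul_one]
  rw [Finset.sum_congr rfl (fun t _ => by rw [hbasis t])] at h2
  rw [← h2]
  by_cases hc : m = n - 1
  · simp [hc]
  · have : ¬ (n - 1 = m) := fun hh => hc hh.symm
    simp [hc, this]

lemma euler_trace {k : Type*} [Field k] {n : ℕ} {f : k[X]} (hdeg : f.degree = n)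
    (hsep : f.Separable) {d : AdjoinRoot f}
    (hd : aeval (AdjoinRoot.root f) (derivative f) * d = 1)
    {m : ℕ} (hm : m < n) :
    f.leadingCoeff * Algebra.trace k (AdjoinRoot f) (AdjoinRoot.root f ^ m * d)
      = if m = n - 1 then 1 else 0 := by
  classical
  have hf0 : f ≠ 0 := fun h => by simp [h] at hdeg
  have hnd : f.natDegree = n := natDegree_eq_of_degree_eq_some hdeg
  set θ := AdjoinRoot.root f with hθ
  let pb := AdjoinRoot.powerBasis hf0
  let b : Module.Basis (Fin n) k (AdjoinRoot f) := pb.basis.reindex (finCongr (by simp [pb, hnd]))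
  have hb : ∀ i : Fin n, b i = θ ^ (i : ℕ) := by
    intro i
    simp only [b, Module.Basis.reindex_apply]
    rw [(AdjoinRoot.powerBasis hf0).basis_eq_pow]
    simp [AdjoinRoot.powerBasis_gen, hθ]
  obtain ⟨e, he⟩ := AdjoinRoot.mk_surjective (g := f) d
  set C : Matrix (Fin n) (Fin n) k := Algebra.leftMulMatrix b θ with hC
  have htr : Algebra.trace k (AdjoinRoot f) (θ ^ m * d)
      = Matrix.trace (C ^ m * (aeval C e : Matrix (Fin n) (Fin n) k)) := by
    rw [Algebra.trace_eq_matrix_trace b, _root_.map_mul, map_pow, hC, ← he, ← AdjoinRoot.aeval_eq,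
      aeval_algHom_apply]
  -- companion property of C over k
  have hCcol : ∀ j : Fin n, θ ^ ((j : ℕ) + 1)
      = ∑ i : Fin n, algebraMap k (AdjoinRoot f) (C i j) * θ ^ (i : ℕ) := by
    intro j
    have h1 : θ * b j = ∑ i : Fin n, b.repr (θ * b j) i • b i := (b.sum_repr (θ * b j)).symm
    have h2 : θ * b j = θ ^ ((j : ℕ) + 1) := by rw [hb j, pow_succ']
    rw [← h2, h1]
    refine Finset.sum_congr rfl fun i _ => ?_
    rw [hC, Algebra.leftMulMatrix_eq_repr_mul, Algebra.smul_def, hb i]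
  -- divisibility statements over k[X]
  have hdvdC : ∀ j : Fin n,
      f ∣ ((∑ i : Fin n, Polynomial.C (C i j) * X ^ (i : ℕ)) - X ^ ((j : ℕ) + 1)) := by
    intro j
    rw [← AdjoinRoot.mk_eq_zero, map_sub, map_sum]
    have : ∀ i : Fin n, AdjoinRoot.mk f (Polynomial.C (C i j) * X ^ (i : ℕ))
        = algebraMap k (AdjoinRoot f) (C i j) * θ ^ (i : ℕ) := by
      intro i
      rw [_root_.map_mul, map_pow, AdjoinRoot.mk_X]
      rfl
    simp only [this]
    rw [map_pow, AdjoinRoot.mk_X, ← hCcol j]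
    exact sub_self _
  have hdvdE : f ∣ (derivative f * e - 1) := by
    rw [← AdjoinRoot.mk_eq_zero, map_sub, _root_.map_mul, _root_.map_one, he,
      ← AdjoinRoot.aeval_eq, hd, sub_self]
  -- pass to algebraic closure
  set K := AlgebraicClosure k with hK
  set φ := algebraMap k K with hφ
  have hφinj : Function.Injective φ := φ.injective
  set g := f.map φ with hg
  have hg0 : g ≠ 0 := Polynomial.map_ne_zero hf0
  have hsplit : Splits g := IsAlgClosed.splits g
  have hcardroots : Multiset.card g.roots = n := by
    rw [splits_iff_card_roots.mp hsplit, natDegree_map, hnd]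
  have hnodup : g.roots.Nodup := Polynomial.nodup_roots (hsep.map (f := φ))
  set t : Finset K := g.roots.toFinset with ht
  have htcard : #t = n := by
    rw [ht, Multiset.toFinset_card_of_nodup hnodup, hcardroots]
  set eqv := Finset.equivFinOfCardEq htcard with heqv
  set r : Fin n → K := fun i => ((eqv.symm i : t) : K) with hr
  have hrinj : Function.Injective r := fun i j h =>
    eqv.symm.injective (Subtype.ext h)
  have hmem : ∀ i, r i ∈ g.roots := by
    intro i
    exact Multiset.mem_toFinset.mp (eqv.symm i).2
  have hroot : ∀ i, g.eval (r i) = 0 := fun i => isRoot_of_mem_roots (hmem i)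
  have hgfact : g = Polynomial.C (φ f.leadingCoeff) * ∏ i : Fin n, (X - Polynomial.C (r i)) := by
    have h1 := hsplit.eq_prod_roots
    have h2 : t.val = g.roots := by rw [ht, Multiset.toFinset_val, hnodup.dedup]
    have h3 : (Multiset.map (fun a => X - Polynomial.C a) g.roots).prod
        = ∏ i : Fin n, (X - Polynomial.C (r i)) := by
      rw [← h2, ← Finset.prod_eq_multiset_prod,
        ← Finset.prod_coe_sort t (fun a => X - Polynomial.C a),
        ← Equiv.prod_comp eqv.symm (fun x : t => X - Polynomial.C (x : K))]
    rw [h1, h3, Polynomial.leadingCoeff_map_of_injective hφinj]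
  -- Vandermonde conjugation
  set ψ : Matrix (Fin n) (Fin n) k →ₐ[k] Matrix (Fin n) (Fin n) K :=
    (Algebra.ofId k K).mapMatrix with hψ
  set V := Matrix.vandermonde r with hV
  have hVdet : V.det ≠ 0 := Matrix.det_vandermonde_ne_zero_iff.mpr hrinj
  have hVC : V * ψ C = Matrix.diagonal r * V := by
    ext x j
    rw [Matrix.mul_apply, Matrix.diagonal_mul]
    have h2 : Polynomial.eval (r x)
        (((∑ i : Fin n, Polynomial.C (C i j) * X ^ (i : ℕ)) - X ^ ((j : ℕ) + 1)).map φ) = 0 :=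
      eval_eq_zero_of_dvd_of_eval_eq_zero (Polynomial.map_dvd φ (hdvdC j)) (hroot x)
    simp only [Polynomial.map_sub, Polynomial.map_sum, Polynomial.map_mul, map_C,
      Polynomial.map_pow, Polynomial.map_X, eval_sub, eval_finset_sum, eval_mul, eval_C,
      eval_pow, eval_X, sub_eq_zero] at h2
    calc ∑ i : Fin n, V x i * ψ C i j
        = ∑ i : Fin n, φ (C i j) * r x ^ (i : ℕ) := by
          refine Finset.sum_congr rfl fun i _ => ?_
          rw [hV, Matrix.vandermonde_apply, hψ, AlgHom.mapMatrix_apply, Matrix.map_apply,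
            mul_comm]
          rfl
      _ = r x ^ ((j : ℕ) + 1) := h2
      _ = r x * V x j := by rw [hV, Matrix.vandermonde_apply, pow_succ']
  have hpow : ∀ p : ℕ, V * (ψ C) ^ p = (Matrix.diagonal r) ^ p * V := by
    intro p
    induction p with
    | zero => simp
    | succ p ih =>
        rw [pow_succ, pow_succ, ← mul_assoc, ih, mul_assoc, hVC, ← mul_assoc]
  have haev : V * aeval (ψ C) e = aeval (Matrix.diagonal r) e * V := by
    rw [Polynomial.aeval_eq_sum_range, Polynomial.aeval_eq_sum_range, Finset.mul_sum,
      Finset.sum_mul]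
    refine Finset.sum_congr rfl fun i _ => ?_
    rw [mul_smul_comm, smul_mul_assoc, hpow]
  have htr2 : Matrix.trace ((ψ C) ^ m * aeval (ψ C) e)
      = Matrix.trace ((Matrix.diagonal r) ^ m * aeval (Matrix.diagonal r) e) := by
    have hVu : IsUnit V.det := isUnit_iff_ne_zero.mpr hVdet
    have hVA : V * ((ψ C) ^ m * aeval (ψ C) e)
        = ((Matrix.diagonal r) ^ m * aeval (Matrix.diagonal r) e) * V := by
      rw [← mul_assoc, hpow, mul_assoc, haev, ← mul_assoc]
    have h1 : (ψ C) ^ m * aeval (ψ C) e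
        = V⁻¹ * (((Matrix.diagonal r) ^ m * aeval (Matrix.diagonal r) e) * V) := by
      rw [← hVA, ← mul_assoc, Matrix.nonsing_inv_mul V hVu, one_mul]
    rw [h1, Matrix.trace_mul_comm, mul_assoc, Matrix.mul_nonsing_inv V hVu, mul_one]
  have hdiagaev : aeval (Matrix.diagonal r) e
      = Matrix.diagonal (fun x => Polynomial.eval (r x) (e.map φ)) := by
    have h1 : Matrix.diagonal r = Matrix.diagonalAlgHom k r := rfl
    rw [h1, aeval_algHom_apply, Matrix.diagonalAlgHom_apply]
    have h3 : (aeval r e : Fin n → K) = fun x => Polynomial.eval (r x) (e.map φ) := by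
      funext x
      have h2 := aeval_algHom_apply (Pi.evalAlgHom k (fun _ : Fin n => K) x) r e
      rw [show ((aeval r) e) x = (Pi.evalAlgHom k (fun _ : Fin n => K) x) ((aeval r) e) from rfl,
        ← h2, Polynomial.aeval_def, ← Polynomial.eval_map]
      rfl
    rw [h3]
  have htr3 : Matrix.trace ((Matrix.diagonal r) ^ m * aeval (Matrix.diagonal r) e)
      = ∑ x : Fin n, r x ^ m * Polynomial.eval (r x) (e.map φ) := by
    rw [hdiagaev, Matrix.diagonal_pow, Matrix.diagonal_mul_diagonal, Matrix.trace_diagonal]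
    rfl
  have hmapTrace : φ (Matrix.trace (C ^ m * (aeval C e : Matrix (Fin n) (Fin n) k)))
      = Matrix.trace ((ψ C) ^ m * aeval (ψ C) e) := by
    rw [← map_pow ψ, aeval_algHom_apply ψ C e, ← _root_.map_mul ψ]
    rw [AddMonoidHom.map_trace (φ : k →+* K) (C ^ m * aeval C e)]
    rfl
  -- evaluation of e at roots
  have hfe : ∀ x : Fin n, Polynomial.eval (r x) (derivative g) * Polynomial.eval (r x) (e.map φ)
      = 1 := by
    intro x
    have h2 := eval_eq_zero_of_dvd_of_eval_eq_zero (Polynomial.map_dvd φ hdvdE) (hroot x)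
    simp only [Polynomial.map_sub, Polynomial.map_mul, Polynomial.map_one, eval_sub, eval_mul,
      eval_one, sub_eq_zero] at h2
    rw [hg, ← Polynomial.derivative_map] at *
    exact h2
  have hπ : ∀ x : Fin n, (∏ s ∈ Finset.univ.erase x, (r x - r s)) ≠ 0 := by
    intro x
    refine Finset.prod_ne_zero_iff.mpr fun s hs => sub_ne_zero_of_ne fun hc => ?_
    exact (Finset.mem_erase.mp hs).1 (hrinj hc).symm
  have hlc0 : φ f.leadingCoeff ≠ 0 := fun h =>
    hf0 (leadingCoeff_eq_zero.mp (hφinj (by rwa [map_zero])))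
  have hder : ∀ x : Fin n, Polynomial.eval (r x) (derivative g)
      = φ f.leadingCoeff * ∏ s ∈ Finset.univ.erase x, (r x - r s) := by
    intro x
    conv_lhs => rw [hgfact]
    rw [derivative_C_mul, eval_mul, eval_C, ← Lagrange.nodal_eq,
      Lagrange.eval_nodal_derivative_eval_node_eq (Finset.mem_univ x), Lagrange.eval_nodal]
  have hevale : ∀ x : Fin n, Polynomial.eval (r x) (e.map φ)
      = (φ f.leadingCoeff * ∏ s ∈ Finset.univ.erase x, (r x - r s))⁻¹ := by
    intro x
    have := hfe x
    rw [hder x] at this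
    exact eq_inv_of_mul_eq_one_left (by rw [mul_comm]; exact this)
  -- final computation
  apply hφinj
  rw [_root_.map_mul, htr, hmapTrace, htr2, htr3]
  have hsum : φ f.leadingCoeff * ∑ x : Fin n, r x ^ m * Polynomial.eval (r x) (e.map φ)
      = if m = n - 1 then 1 else 0 := by
    rw [Finset.mul_sum]
    rw [Finset.sum_congr rfl (fun x _ => by
      rw [hevale x, mul_inv, ← mul_assoc, mul_comm (φ f.leadingCoeff) (r x ^ m), mul_assoc,
        ← mul_assoc (φ f.leadingCoeff), mul_inv_cancel₀ hlc0, one_mul])]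
    exact euler_sum hrinj hm
  rw [hsum, apply_ite φ, _root_.map_one, map_zero]

/-- Proposition 2.5(i): the quadratic forms `Q_j` defined by
`ξ(u₀ + u₁θ + … + u_{n-1}θ^{n-1})² = Σ Q_j θ^j` are given by the stated
matrix formula, where `𝐆` is the twisted trace-form matrix and `𝐇 = 𝐆Θ`. -/
theorem stmt_0 (k : Type*) [Field k] (n : ℕ) (f : k[X])
    (hdeg : f.degree = n) (hsep : f.Separable)
    (ξ : (AdjoinRoot f)ˣ) (d : AdjoinRoot f)
    (hd : aeval (AdjoinRoot.root f) (derivative f) * d = 1)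
    (Q : Fin n → (Fin n → k) → k)
    (hQ : ∀ u : Fin n → k,
      (ξ : AdjoinRoot f) *
          (∑ i : Fin n, algebraMap k (AdjoinRoot f) (u i) * AdjoinRoot.root f ^ (i : ℕ)) ^ 2
        = ∑ j : Fin n, algebraMap k (AdjoinRoot f) (Q j u) * AdjoinRoot.root f ^ (j : ℕ))
    (G : Matrix (Fin n) (Fin n) k)
    (hG : ∀ i j : Fin n, G i j =
      Algebra.trace k (AdjoinRoot f)
        (f.leadingCoeff • ((ξ : AdjoinRoot f) * AdjoinRoot.root f ^ ((i : ℕ) + (j : ℕ)) * d)))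
    (Θ : Matrix (Fin n) (Fin n) k)
    (hΘ : ∀ j : Fin n, AdjoinRoot.root f ^ ((j : ℕ) + 1)
        = ∑ i : Fin n, algebraMap k (AdjoinRoot f) (Θ i j) * AdjoinRoot.root f ^ (i : ℕ))
    (H : Matrix (Fin n) (Fin n) k) (hH : H = G * Θ) :
    G.IsSymm ∧ H.IsSymm ∧ IsUnit G ∧
      ∀ (j : Fin n) (u : Fin n → k),
        Q j u = f.leadingCoeff⁻¹ *
          ∑ i ∈ Finset.Icc ((j : ℕ) + 1) n,
            f.coeff i * (u ⬝ᵥ ((G * (G⁻¹ * H) ^ (i - (j : ℕ) - 1)) *ᵥ u)) := by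
  classical
  have hf0 : f ≠ 0 := fun h => by simp [h] at hdeg
  have hnd : f.natDegree = n := natDegree_eq_of_degree_eq_some hdeg
  set θ : AdjoinRoot f := AdjoinRoot.root f with hθ
  let pb := AdjoinRoot.powerBasis hf0
  let b : Module.Basis (Fin n) k (AdjoinRoot f) := pb.basis.reindex (finCongr (by simp [pb, hnd]))
  have hb : ∀ i : Fin n, b i = θ ^ (i : ℕ) := by
    intro i
    simp only [b, Module.Basis.reindex_apply]
    rw [(AdjoinRoot.powerBasis hf0).basis_eq_pow]
    simp [AdjoinRoot.powerBasis_gen, hθ]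
  -- the twisted trace functional
  set Tl : AdjoinRoot f →ₗ[k] k :=
    f.leadingCoeff • ((Algebra.trace k (AdjoinRoot f)).comp (LinearMap.mulRight k d)) with hTldef
  have hTl : ∀ z : AdjoinRoot f, Tl z = Algebra.trace k (AdjoinRoot f) (f.leadingCoeff • (z * d)) := by
    intro z
    rw [hTldef]
    simp only [LinearMap.smul_apply, LinearMap.coe_comp, Function.comp_apply,
      LinearMap.mulRight_apply, smul_eq_mul]
    rw [_root_.map_smul, smul_eq_mul]
  have hGT : ∀ i j : Fin n, G i j = Tl ((ξ : AdjoinRoot f) * θ ^ ((i : ℕ) + (j : ℕ))) := by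
    intro i j
    rw [hG i j, hTl]
  -- Euler's formula
  have hE : ∀ m : ℕ, m < n → Tl (θ ^ m) = if m = n - 1 then 1 else 0 := by
    intro m hm
    rw [hTl]
    have := euler_trace hdeg hsep hd hm
    rw [_root_.map_smul, smul_eq_mul]
    exact this
  -- the recurrence from f(θ) = 0
  have hR : ∀ z : AdjoinRoot f, ∑ i ∈ Finset.range (n + 1), f.coeff i * Tl (z * θ ^ i) = 0 := by
    intro z
    have h1 : aeval θ f = 0 := by rw [AdjoinRoot.aeval_eq, AdjoinRoot.mk_self]
    have h2 : aeval θ f = ∑ i ∈ Finset.range (n + 1), f.coeff i • θ ^ i := by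
      rw [Polynomial.aeval_eq_sum_range, hnd]
    have h3 : ∑ i ∈ Finset.range (n + 1), f.coeff i * Tl (z * θ ^ i)
        = Tl (z * ∑ i ∈ Finset.range (n + 1), f.coeff i • θ ^ i) := by
      rw [Finset.mul_sum, map_sum]
      refine Finset.sum_congr rfl fun i _ => ?_
      rw [mul_smul_comm, _root_.map_smul, smul_eq_mul]
    rw [h3, ← h2, h1, mul_zero, map_zero]
  -- duality
  have hdual : ∀ (z : AdjoinRoot f) (j : Fin n), b.repr z j = f.leadingCoeff⁻¹ *
      ∑ i ∈ Finset.Icc ((j : ℕ) + 1) n, f.coeff i * Tl (z * θ ^ (i - (j : ℕ) - 1)) := by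
    have hlc : f.coeff n = f.leadingCoeff := by rw [← hnd, coeff_natDegree]
    have hlc0 : f.leadingCoeff ≠ 0 := leadingCoeff_ne_zero.mpr hf0
    have hbasiscase : ∀ a j : Fin n, (f.leadingCoeff⁻¹ *
        ∑ i ∈ Finset.Icc ((j : ℕ) + 1) n, f.coeff i * Tl (θ ^ (a : ℕ) * θ ^ (i - (j : ℕ) - 1)))
        = if a = j then 1 else 0 := by
      intro a j
      have hj1 : (j : ℕ) < n := j.2
      have ha1 : (a : ℕ) < n := a.2
      rcases lt_trichotomy (a : ℕ) (j : ℕ) with haj | haj | haj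
      · have hz : ∀ i ∈ Finset.Icc ((j : ℕ) + 1) n,
            f.coeff i * Tl (θ ^ (a : ℕ) * θ ^ (i - (j : ℕ) - 1)) = 0 := by
          intro i hi
          obtain ⟨hi1, hi2⟩ := Finset.mem_Icc.mp hi
          rw [← pow_add, hE ((a : ℕ) + (i - (j : ℕ) - 1)) (by omega), if_neg (by omega), mul_zero]
        rw [Finset.sum_eq_zero hz, mul_zero,
          if_neg (fun h => absurd (congrArg Fin.val h) (by omega))]
      · have haj' : a = j := Fin.ext haj
        rw [if_pos haj']
        have hterm : ∀ i ∈ Finset.Icc ((j : ℕ) + 1) n,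
            f.coeff i * Tl (θ ^ (a : ℕ) * θ ^ (i - (j : ℕ) - 1))
            = if i = n then f.leadingCoeff else 0 := by
          intro i hi
          obtain ⟨hi1, hi2⟩ := Finset.mem_Icc.mp hi
          rw [← pow_add, hE _ (by omega)]
          by_cases hin : i = n
          · rw [if_pos (by omega : (a : ℕ) + (i - (j : ℕ) - 1) = n - 1), if_pos hin, mul_one,
              hin, hlc]
          · rw [if_neg (by omega : ¬ (a : ℕ) + (i - (j : ℕ) - 1) = n - 1), if_neg hin, mul_zero]
        rw [Finset.sum_congr rfl hterm, Finset.sum_ite_eq' (Finset.Icc ((j : ℕ) + 1) n) n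
          (fun _ => f.leadingCoeff), if_pos (Finset.mem_Icc.mpr ⟨by omega, le_refl n⟩),
          inv_mul_cancel₀ hlc0]
      · have h0 := hR (θ ^ ((a : ℕ) - (j : ℕ) - 1))
        have hIcc2 : ∀ i ∈ Finset.Icc ((j : ℕ) + 1) n,
            f.coeff i * Tl (θ ^ (a : ℕ) * θ ^ (i - (j : ℕ) - 1))
            = f.coeff i * Tl (θ ^ ((a : ℕ) - (j : ℕ) - 1) * θ ^ i) := by
          intro i hi
          obtain ⟨hi1, hi2⟩ := Finset.mem_Icc.mp hi
          rw [← pow_add, ← pow_add]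
          have he2 : (a : ℕ) + (i - (j : ℕ) - 1) = (a : ℕ) - (j : ℕ) - 1 + i := by omega
          rw [he2]
        rw [Finset.sum_congr rfl hIcc2]
        have hsplit : ∑ i ∈ Finset.Ico 0 ((j : ℕ) + 1), f.coeff i * Tl (θ ^ ((a : ℕ) - (j : ℕ) - 1) * θ ^ i)
            + ∑ i ∈ Finset.Ico ((j : ℕ) + 1) (n + 1), f.coeff i * Tl (θ ^ ((a : ℕ) - (j : ℕ) - 1) * θ ^ i)
            = ∑ i ∈ Finset.range (n + 1), f.coeff i * Tl (θ ^ ((a : ℕ) - (j : ℕ) - 1) * θ ^ i) := by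
          rw [Finset.range_eq_Ico]
          exact Finset.sum_Ico_consecutive _ (by omega) (by omega)
        have hlow : ∑ i ∈ Finset.Ico 0 ((j : ℕ) + 1), f.coeff i * Tl (θ ^ ((a : ℕ) - (j : ℕ) - 1) * θ ^ i) = 0 := by
          refine Finset.sum_eq_zero fun i hi => ?_
          obtain ⟨_, hi2⟩ := Finset.mem_Ico.mp hi
          rw [← pow_add, hE ((a : ℕ) - (j : ℕ) - 1 + i) (by omega), if_neg (by omega), mul_zero]
        have hIccIco : Finset.Icc ((j : ℕ) + 1) n = Finset.Ico ((j : ℕ) + 1) (n + 1) :=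
          (Finset.Ico_add_one_right_eq_Icc _ _).symm
        rw [hIccIco]
        rw [hlow, zero_add, h0] at hsplit
        rw [hsplit, mul_zero, if_neg (fun h => absurd (congrArg Fin.val h) (by omega))]
    intro z j
    conv_rhs => rw [← b.sum_repr z]
    have hswap : ∑ i ∈ Finset.Icc ((j : ℕ) + 1) n,
        f.coeff i * Tl ((∑ a : Fin n, b.repr z a • b a) * θ ^ (i - (j : ℕ) - 1))
        = ∑ a : Fin n, b.repr z a *
            ∑ i ∈ Finset.Icc ((j : ℕ) + 1) n, f.coeff i * Tl (θ ^ (a : ℕ) * θ ^ (i - (j : ℕ) - 1)) := by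
      simp only [Finset.sum_mul, smul_mul_assoc, map_sum, _root_.map_smul, smul_eq_mul, Finset.mul_sum]
      rw [Finset.sum_comm]
      refine Finset.sum_congr rfl fun a _ => ?_
      refine Finset.sum_congr rfl fun i _ => ?_
      rw [hb a]
      ring
    rw [hswap, Finset.mul_sum]
    have hterm : ∀ a : Fin n, f.leadingCoeff⁻¹ * (b.repr z a *
        ∑ i ∈ Finset.Icc ((j : ℕ) + 1) n, f.coeff i * Tl (θ ^ (a : ℕ) * θ ^ (i - (j : ℕ) - 1)))
        = if a = j then b.repr z a else 0 := by
      intro a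
      rw [mul_comm (f.leadingCoeff⁻¹), mul_assoc, mul_comm _ (f.leadingCoeff⁻¹), hbasiscase a j]
      by_cases h : a = j
      · rw [if_pos h, if_pos h, mul_one]
      · rw [if_neg h, if_neg h, mul_zero]
    rw [Finset.sum_congr rfl (fun a _ => hterm a), Finset.sum_ite_eq' Finset.univ j
      (fun a => b.repr z a), if_pos (Finset.mem_univ j)]
  -- entries of H
  have hHT : ∀ i j : Fin n, H i j = Tl ((ξ : AdjoinRoot f) * θ ^ ((i : ℕ) + (j : ℕ) + 1)) := by
    intro i j
    rw [hH, Matrix.mul_apply]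
    have h1 : ∑ l : Fin n, G i l * Θ l j
        = Tl ((ξ : AdjoinRoot f) * θ ^ (i : ℕ)
            * ∑ l : Fin n, algebraMap k (AdjoinRoot f) (Θ l j) * θ ^ (l : ℕ)) := by
      rw [Finset.mul_sum, map_sum]
      refine Finset.sum_congr rfl fun l _ => ?_
      rw [hGT i l]
      have h2 : (ξ : AdjoinRoot f) * θ ^ (i : ℕ)
          * (algebraMap k (AdjoinRoot f) (Θ l j) * θ ^ (l : ℕ))
          = Θ l j • ((ξ : AdjoinRoot f) * θ ^ ((i : ℕ) + (l : ℕ))) := by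
        rw [Algebra.smul_def, pow_add]
        ring
      rw [h2, _root_.map_smul, smul_eq_mul, mul_comm]
    rw [h1, ← hΘ j, mul_assoc, ← pow_add, ← add_assoc]
  have hGsymm : G.IsSymm := by
    rw [Matrix.IsSymm]
    ext i j
    rw [Matrix.transpose_apply, hGT, hGT, add_comm]
  have hHsymm : H.IsSymm := by
    rw [Matrix.IsSymm]
    ext i j
    rw [Matrix.transpose_apply, hHT, hHT, add_comm ((i : ℕ)) ((j : ℕ))]
  -- representation of Θ-powers acting on coordinate vectors
  have hrep : ∀ (p : ℕ) (v : Fin n → k),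
      ∑ i : Fin n, algebraMap k (AdjoinRoot f) (((Θ ^ p) *ᵥ v) i) * θ ^ (i : ℕ)
        = θ ^ p * ∑ i : Fin n, algebraMap k (AdjoinRoot f) (v i) * θ ^ (i : ℕ) := by
    have hstep : ∀ w : Fin n → k,
        ∑ i : Fin n, algebraMap k (AdjoinRoot f) ((Θ *ᵥ w) i) * θ ^ (i : ℕ)
          = θ * ∑ i : Fin n, algebraMap k (AdjoinRoot f) (w i) * θ ^ (i : ℕ) := by
      intro w
      simp only [Matrix.mulVec, dotProduct, map_sum, Finset.sum_mul, _root_.map_mul]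
      rw [Finset.sum_comm, Finset.mul_sum]
      refine Finset.sum_congr rfl fun l _ => ?_
      have h1 : ∑ i : Fin n, algebraMap k (AdjoinRoot f) (Θ i l)
            * algebraMap k (AdjoinRoot f) (w l) * θ ^ (i : ℕ)
          = algebraMap k (AdjoinRoot f) (w l)
            * ∑ i : Fin n, algebraMap k (AdjoinRoot f) (Θ i l) * θ ^ (i : ℕ) := by
        rw [Finset.mul_sum]
        refine Finset.sum_congr rfl fun i _ => ?_
        ring
      rw [h1, ← hΘ l, pow_succ]
      ring
    intro p
    induction p with
    | zero => intro v; rw [pow_zero, pow_zero, Matrix.one_mulVec, one_mul]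
    | succ p ih =>
        intro v
        have h2 : (Θ ^ (p + 1)) *ᵥ v = Θ *ᵥ ((Θ ^ p) *ᵥ v) := by
          rw [pow_succ', Matrix.mulVec_mulVec]
        rw [h2, hstep ((Θ ^ p) *ᵥ v), ih v, pow_succ', mul_assoc]
  -- the Gram matrix pairing
  have hquad : ∀ v v' : Fin n → k, v ⬝ᵥ (G *ᵥ v')
      = Tl ((ξ : AdjoinRoot f) *
          ((∑ i : Fin n, algebraMap k (AdjoinRoot f) (v i) * θ ^ (i : ℕ))
            * (∑ i : Fin n, algebraMap k (AdjoinRoot f) (v' i) * θ ^ (i : ℕ)))) := by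
    intro v v'
    simp only [dotProduct, Matrix.mulVec, Finset.mul_sum, Finset.sum_mul, map_sum]
    rw [Finset.sum_comm]
    refine Finset.sum_congr rfl fun i _ => ?_
    refine Finset.sum_congr rfl fun l _ => ?_
    rw [hGT l i]
    have h2 : (ξ : AdjoinRoot f) * (algebraMap k (AdjoinRoot f) (v l) * θ ^ (l : ℕ)
        * (algebraMap k (AdjoinRoot f) (v' i) * θ ^ (i : ℕ)))
        = (v l * v' i) • ((ξ : AdjoinRoot f) * θ ^ ((l : ℕ) + (i : ℕ))) := by
      rw [Algebra.smul_def, _root_.map_mul, pow_add]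
      ring
    rw [h2, _root_.map_smul, smul_eq_mul]
    ring
  -- invertibility of G
  have hGu : IsUnit G := by
    rw [Matrix.isUnit_iff_isUnit_det, isUnit_iff_ne_zero]
    intro hdet0
    obtain ⟨v, hv0, hv⟩ := Matrix.exists_mulVec_eq_zero_iff.mpr hdet0
    set w : AdjoinRoot f := ∑ i : Fin n, algebraMap k (AdjoinRoot f) (v i) * θ ^ (i : ℕ) with hw
    have hTz : ∀ p : Fin n, Tl ((ξ : AdjoinRoot f) * w * θ ^ (p : ℕ)) = 0 := by
      intro p
      have h3 : (G *ᵥ v) p = Tl ((ξ : AdjoinRoot f) * w * θ ^ (p : ℕ)) := by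
        rw [hw]
        simp only [Matrix.mulVec, dotProduct, Finset.mul_sum, Finset.sum_mul, map_sum]
        refine Finset.sum_congr rfl fun l _ => ?_
        rw [hGT p l]
        have h2 : (ξ : AdjoinRoot f) * (algebraMap k (AdjoinRoot f) (v l) * θ ^ (l : ℕ))
            * θ ^ (p : ℕ)
            = v l • ((ξ : AdjoinRoot f) * θ ^ ((p : ℕ) + (l : ℕ))) := by
          rw [Algebra.smul_def, pow_add]
          ring
        rw [h2, _root_.map_smul, smul_eq_mul]
        ring
      rw [← h3, hv]
      rfl
    have hz0 : (ξ : AdjoinRoot f) * w = 0 := by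
      have hco : ∀ j : Fin n, b.repr ((ξ : AdjoinRoot f) * w) j = 0 := by
        intro j
        rw [hdual ((ξ : AdjoinRoot f) * w) j]
        have hzero : ∀ i ∈ Finset.Icc ((j : ℕ) + 1) n,
            f.coeff i * Tl ((ξ : AdjoinRoot f) * w * θ ^ (i - (j : ℕ) - 1)) = 0 := by
          intro i hi
          obtain ⟨hi1, hi2⟩ := Finset.mem_Icc.mp hi
          have hlt : i - (j : ℕ) - 1 < n := by omega
          have := hTz ⟨i - (j : ℕ) - 1, hlt⟩
          rw [this, mul_zero]
        rw [Finset.sum_eq_zero hzero, mul_zero]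
      calc (ξ : AdjoinRoot f) * w
          = ∑ j : Fin n, b.repr ((ξ : AdjoinRoot f) * w) j • b j := (b.sum_repr _).symm
        _ = 0 := Finset.sum_eq_zero fun j _ => by rw [hco j, zero_smul]
    have hw0 : w = 0 := (Units.mul_right_eq_zero ξ).mp hz0
    apply hv0
    funext i
    have h4 : (∑ i : Fin n, algebraMap k (AdjoinRoot f) (v i) * θ ^ (i : ℕ))
        = ∑ i : Fin n, v i • b i := by
      refine Finset.sum_congr rfl fun i _ => ?_
      rw [hb i, Algebra.smul_def]
    have h5 : b.repr w i = v i := by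
      rw [hw, h4, b.repr_sum_self]
    rw [← h5, hw0, map_zero]
    rfl
  refine ⟨hGsymm, hHsymm, hGu, ?_⟩
  intro j u
  have hGdet : IsUnit G.det := (Matrix.isUnit_iff_isUnit_det G).mp hGu
  have hGinvH : G⁻¹ * H = Θ := by
    rw [hH, ← Matrix.mul_assoc, Matrix.nonsing_inv_mul G hGdet, Matrix.one_mul]
  set w : AdjoinRoot f := ∑ i : Fin n, algebraMap k (AdjoinRoot f) (u i) * θ ^ (i : ℕ) with hw
  have hz := hQ u
  have hrepr : b.repr ((ξ : AdjoinRoot f) * w ^ 2) j = Q j u := by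
    rw [hw, hz]
    have h4 : (∑ j : Fin n, algebraMap k (AdjoinRoot f) (Q j u) * θ ^ (j : ℕ))
        = ∑ j : Fin n, Q j u • b j := by
      refine Finset.sum_congr rfl fun i _ => ?_
      rw [hb i, Algebra.smul_def]
    rw [h4, b.repr_sum_self]
  have key := hdual ((ξ : AdjoinRoot f) * w ^ 2) j
  rw [hrepr] at key
  rw [key]
  congr 1
  refine Finset.sum_congr rfl fun i hi => ?_
  congr 1
  rw [hGinvH, ← Matrix.mulVec_mulVec, hquad u ((Θ ^ (i - (j : ℕ) - 1)) *ᵥ u),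
    hrep (i - (j : ℕ) - 1) u, ← hw]
  congr 1
  ring
end

section
/- Let k be a field, let f(x) = f_n x^n + … + f_1 x + f_0 ∈ k[x] be a separable polynomial of degree n with f_n ≠ 0, let L = k[x]/(f) = k[θ], and fix a unit ξ ∈ L^×. Let 𝐆 be the n×n matrix with (i,j) entry Tr_{L/k}(f_n ξ θ^{i+j}/f'(θ)) (indices 0 ≤ i,j ≤ n−1) and 𝐇 = 𝐆Θ where Θ is the matrix of multiplication by θ in the power basis. If 𝐯 = 𝐆^{−1}(1, θ, …, θ^{n−1})^T ∈ L^n, then (θ𝐆 − 𝐇)𝐯 = 0 and 𝐯^T 𝐆 𝐯 = f'(θ)/(f_n ξ). -/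
set_option maxHeartbeats 1000000

open Polynomial Matrix

/-- Proposition 2.5(iii): if `𝐯 = 𝐆⁻¹(1, θ, …, θ^{n−1})ᵀ` then `(θ𝐆 − 𝐇)𝐯 = 0`
and `𝐯ᵀ𝐆𝐯 = f'(θ)/(f_n ξ)`. -/
theorem stmt_2 (k : Type*) [Field k] (n : ℕ) (f : k[X])
    (hdeg : f.degree = n) (hsep : f.Separable)
    (ξ : (AdjoinRoot f)ˣ) (d : AdjoinRoot f)
    (hd : aeval (AdjoinRoot.root f) (derivative f) * d = 1)
    (G : Matrix (Fin n) (Fin n) k)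
    (hG : ∀ i j : Fin n, G i j =
      Algebra.trace k (AdjoinRoot f)
        (f.leadingCoeff • ((ξ : AdjoinRoot f) * AdjoinRoot.root f ^ ((i : ℕ) + (j : ℕ)) * d)))
    (Θ : Matrix (Fin n) (Fin n) k)
    (hΘ : ∀ j : Fin n, AdjoinRoot.root f ^ ((j : ℕ) + 1)
        = ∑ i : Fin n, algebraMap k (AdjoinRoot f) (Θ i j) * AdjoinRoot.root f ^ (i : ℕ))
    (H : Matrix (Fin n) (Fin n) k) (hH : H = G * Θ)
    (v : Fin n → AdjoinRoot f)
    (hv : v = (G.map (algebraMap k (AdjoinRoot f)))⁻¹ *ᵥ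
      (fun i : Fin n => AdjoinRoot.root f ^ (i : ℕ))) :
    (AdjoinRoot.root f • G.map (algebraMap k (AdjoinRoot f))
        - H.map (algebraMap k (AdjoinRoot f))) *ᵥ v = 0 ∧
    v ⬝ᵥ (G.map (algebraMap k (AdjoinRoot f)) *ᵥ v)
      = f.leadingCoeff⁻¹ •
          (aeval (AdjoinRoot.root f) (derivative f) * ((ξ⁻¹ : (AdjoinRoot f)ˣ) : AdjoinRoot f)) := by
  classical
  rcases Nat.eq_zero_or_pos n with hn | hn
  · subst hn
    have hfu : IsUnit f := by
      rw [Polynomial.isUnit_iff_degree_eq_zero]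
      exact_mod_cast hdeg
    haveI : Subsingleton (AdjoinRoot f) := by
      have h1 : (1 : AdjoinRoot f) = 0 := by
        have : AdjoinRoot.mk f 1 = 0 := AdjoinRoot.mk_eq_zero.mpr hfu.dvd
        simpa using this
      exact subsingleton_of_zero_eq_one h1.symm
    exact ⟨funext fun i => i.elim0, Subsingleton.elim _ _⟩
  set θ := AdjoinRoot.root f with hθdef
  have hndeg : f.natDegree = n := natDegree_eq_of_degree_eq_some hdeg
  have hf0 : f ≠ 0 := by
    intro h
    rw [h, degree_zero] at hdeg
    exact absurd hdeg (by simp)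
  have hc0 : f.leadingCoeff ≠ 0 := leadingCoeff_ne_zero.mpr hf0
  -- power basis of (AdjoinRoot f) over k, reindexed by `Fin n`
  let pb := AdjoinRoot.powerBasis hf0
  let bL : Module.Basis (Fin n) k (AdjoinRoot f) := pb.basis.reindex (finCongr hndeg)
  have hbL : ∀ i : Fin n, bL i = θ ^ (i : ℕ) := by
    intro i
    show pb.basis.reindex (finCongr hndeg) i = θ ^ (i : ℕ)
    rw [Module.Basis.reindex_apply, PowerBasis.basis_eq_pow]
    simp [pb]
    rfl
  haveI : Nontrivial (AdjoinRoot f) := ⟨⟨bL ⟨0, hn⟩, 0, bL.ne_zero _⟩⟩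
  have hφinj : Function.Injective (algebraMap k (AdjoinRoot f)) := (algebraMap k (AdjoinRoot f)).injective
  -- monic normalization of f
  set fM : k[X] := f * C f.leadingCoeff⁻¹ with hfM
  have hfMmonic : fM.Monic := monic_mul_leadingCoeff_inv hf0
  have hCne : (C f.leadingCoeff⁻¹ : k[X]) ≠ 0 := by
    simp [C_eq_zero, inv_eq_zero, hc0]
  have hfMdeg : fM.natDegree = n := by
    rw [hfM, natDegree_mul hf0 hCne, natDegree_C, add_zero, hndeg]
  have hffM : fM * C f.leadingCoeff = f := by
    rw [hfM, mul_assoc, ← C_mul, inv_mul_cancel₀ hc0, C_1, mul_one]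
  set fm : (AdjoinRoot f)[X] := fM.map (algebraMap k (AdjoinRoot f)) with hfmdef
  have hfmmonic : fm.Monic := hfMmonic.map _
  have hfmdeg : fm.natDegree = n := by
    rw [hfmdef, natDegree_map_eq_of_injective hφinj, hfMdeg]
  set θ' := AdjoinRoot.root fm with hθ'def
  -- power basis of (AdjoinRoot fm) over (AdjoinRoot f)
  let pb' := AdjoinRoot.powerBasis' hfmmonic
  let bA : Module.Basis (Fin n) (AdjoinRoot f) (AdjoinRoot fm) := pb'.basis.reindex (finCongr hfmdeg)
  have hbA : ∀ i : Fin n, bA i = θ' ^ (i : ℕ) := by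
    intro i
    show pb'.basis.reindex (finCongr hfmdeg) i = θ' ^ (i : ℕ)
    rw [Module.Basis.reindex_apply, PowerBasis.basis_eq_pow]
    simp [pb']
    rfl
  haveI : Module.Free (AdjoinRoot f) (AdjoinRoot fm) := Module.Free.of_basis bA
  haveI : Module.Finite (AdjoinRoot f) (AdjoinRoot fm) := Module.Finite.of_basis bA
  have haevalfm : (aeval θ' fm : (AdjoinRoot fm)) = 0 := by
    rw [hθ'def, AdjoinRoot.aeval_eq, AdjoinRoot.mk_self]
  -- the map σ : (AdjoinRoot f) →ₐ[k] (AdjoinRoot fm)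
  have hσroot : (aeval θ' f : (AdjoinRoot fm)) = 0 := by
    have h1 : (aeval θ' fM : (AdjoinRoot fm)) = 0 := by
      rw [← Polynomial.aeval_map_algebraMap (AdjoinRoot f), ← hfmdef]
      exact haevalfm
    calc (aeval θ' f : (AdjoinRoot fm)) = aeval θ' (fM * C f.leadingCoeff) := by rw [hffM]
    _ = 0 := by rw [_root_.map_mul, h1, zero_mul]
  set σ : (AdjoinRoot f) →ₐ[k] (AdjoinRoot fm) := AdjoinRoot.liftAlgHom f (Algebra.ofId k _) θ' hσroot with hσdef
  have hσθ : σ θ = θ' := by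
    rw [hσdef]
    exact AdjoinRoot.liftAlgHom_root f _ _ hσroot
  -- the evaluation ε : (AdjoinRoot fm) →ₐ[(AdjoinRoot f)] (AdjoinRoot f)
  have haevalθf : (aeval θ f : (AdjoinRoot f)) = 0 := by
    rw [hθdef, AdjoinRoot.aeval_eq, AdjoinRoot.mk_self]
  have hεroot : (aeval θ fm : (AdjoinRoot f)) = 0 := by
    rw [hfmdef, Polynomial.aeval_map_algebraMap, hfM, _root_.map_mul, haevalθf, zero_mul]
  set ε : (AdjoinRoot fm) →ₐ[(AdjoinRoot f)] (AdjoinRoot f) := AdjoinRoot.liftAlgHom fm (Algebra.ofId (AdjoinRoot f) _) θ hεroot with hεdef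
  have hεθ' : ε θ' = θ := by
    rw [hεdef]
    exact AdjoinRoot.liftAlgHom_root fm _ _ hεroot
  have hεσ : ∀ x : (AdjoinRoot f), ε (σ x) = x := by
    have hcomp : (ε.restrictScalars k).comp σ = AlgHom.id k (AdjoinRoot f) := by
      apply AdjoinRoot.algHom_ext
      show ε (σ θ) = θ
      rw [hσθ, hεθ']
    intro x
    exact DFunLike.congr_fun hcomp x
  have hσb : ∀ m : Fin n, σ (bL m) = bA m := by
    intro m
    rw [hbL, _root_.map_pow, hσθ, hbA]
  -- trace compatibility
  have htrmat : ∀ w : (AdjoinRoot f),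
      Algebra.leftMulMatrix bA (σ w) = (Algebra.leftMulMatrix bL w).map (algebraMap k (AdjoinRoot f)) := by
    intro w
    ext i j
    rw [Algebra.leftMulMatrix_eq_repr_mul, Matrix.map_apply,
      Algebra.leftMulMatrix_eq_repr_mul]
    have hw : σ w * bA j = ∑ m : Fin n, algebraMap k (AdjoinRoot f) (bL.repr (w * bL j) m) • bA m := by
      have h1 : w * bL j = ∑ m : Fin n, bL.repr (w * bL j) m • bL m := (bL.sum_repr _).symm
      have h2 : σ (w * bL j) = σ w * bA j := by rw [_root_.map_mul, hσb]
      rw [← h2]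
      conv_lhs => rw [h1]
      rw [_root_.map_sum]
      refine Finset.sum_congr rfl fun m _ => ?_
      rw [_root_.map_smul, hσb, algebraMap_smul]
    rw [hw, Module.Basis.repr_sum_self]
  have htrcompat : ∀ w : (AdjoinRoot f),
      Algebra.trace (AdjoinRoot f) (AdjoinRoot fm) (σ w) = algebraMap k (AdjoinRoot f) (Algebra.trace k (AdjoinRoot f) w) := by
    intro w
    rw [Algebra.trace_eq_matrix_trace bA, Algebra.trace_eq_matrix_trace bL, htrmat w]
    simp [Matrix.trace, Matrix.map_apply, _root_.map_sum]
  -- the quotient polynomial g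
  have hrootθ : IsRoot fm θ := by
    show eval θ fm = 0
    rw [← Polynomial.coe_aeval_eq_eval θ]
    exact hεroot
  set g : (AdjoinRoot f)[X] := fm /ₘ (X - C θ) with hgdef
  have hfac : (X - C θ) * g = fm := mul_divByMonic_eq_iff_isRoot.mpr hrootθ
  have hgdeg : g.natDegree < n := by
    rw [hgdef, natDegree_divByMonic fm (monic_X_sub_C θ), hfmdeg, natDegree_X_sub_C]
    omega
  have hgθ : eval θ g = aeval θ (derivative f) * algebraMap k (AdjoinRoot f) f.leadingCoeff⁻¹ := by
    have h1 : eval θ (derivative fm) = eval θ g := by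
      conv_lhs => rw [← hfac]
      simp [derivative_mul]
    have h2 : eval θ (derivative fm) = aeval θ (derivative fM) := by
      rw [hfmdef, Polynomial.derivative_map, Polynomial.eval_map, Polynomial.aeval_def]
    have h3 : derivative fM = derivative f * C f.leadingCoeff⁻¹ := by
      rw [hfM, derivative_mul, derivative_C, mul_zero, add_zero]
    rw [← h1, h2, h3, _root_.map_mul, aeval_C]
  set dm : (AdjoinRoot f) := f.leadingCoeff • d with hdmdef
  have hdm1 : eval θ g * dm = 1 := by
    calc eval θ g * dm
        = aeval θ (derivative f) * d *
            (algebraMap k (AdjoinRoot f) f.leadingCoeff⁻¹ * algebraMap k (AdjoinRoot f) f.leadingCoeff) := by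
          rw [hgθ, hdmdef, Algebra.smul_def]; ring
    _ = 1 := by rw [← _root_.map_mul, inv_mul_cancel₀ hc0, _root_.map_one, mul_one, hd]
  -- the idempotent-like element e
  set e : (AdjoinRoot fm) := σ dm * aeval θ' g with hedef
  have hεaev : ε (aeval θ' g) = eval θ g := by
    rw [← Polynomial.aeval_algHom_apply, hεθ', Polynomial.coe_aeval_eq_eval]
  have hεe : ε e = 1 := by
    rw [hedef, _root_.map_mul, hεσ, hεaev, mul_comm, hdm1]
  have hkill : e * (θ' - algebraMap (AdjoinRoot f) (AdjoinRoot fm) θ) = 0 := by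
    have h1 : aeval θ' g * (θ' - algebraMap (AdjoinRoot f) (AdjoinRoot fm) θ) = 0 := by
      have h2 : aeval θ' g * (θ' - algebraMap (AdjoinRoot f) (AdjoinRoot fm) θ) = aeval θ' ((X - C θ) * g) := by
        rw [_root_.map_mul, _root_.map_sub, aeval_X, aeval_C, mul_comm]
      rw [h2, hfac]
      exact haevalfm
    rw [hedef, mul_assoc, h1, mul_zero]
  have hE : ∀ a : (AdjoinRoot fm), e * a = ε a • e := by
    intro a
    obtain ⟨p, rfl⟩ := AdjoinRoot.mk_surjective a
    have hev : ε (AdjoinRoot.mk fm p) = eval θ p := by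
      rw [hεdef]
      rfl
    obtain ⟨q, hq⟩ : (X - C θ) ∣ (p - C (eval θ p)) :=
      dvd_iff_isRoot.mpr (by simp [IsRoot])
    have hp : AdjoinRoot.mk fm p
        = algebraMap (AdjoinRoot f) (AdjoinRoot fm) (eval θ p) + (θ' - algebraMap (AdjoinRoot f) (AdjoinRoot fm) θ) * AdjoinRoot.mk fm q := by
      have hp' : p = C (eval θ p) + (X - C θ) * q := by rw [← hq]; ring
      conv_lhs => rw [hp']
      rw [_root_.map_add, _root_.map_mul, _root_.map_sub, AdjoinRoot.mk_X, AdjoinRoot.mk_C, AdjoinRoot.mk_C]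
      rfl
    rw [hev, hp, mul_add, ← mul_assoc, hkill, zero_mul, add_zero, Algebra.smul_def, mul_comm]
  -- trace against e is evaluation
  have htr : ∀ z : (AdjoinRoot fm), Algebra.trace (AdjoinRoot f) (AdjoinRoot fm) (z * e) = ε z := by
    intro z
    have hop : (Algebra.lmul (AdjoinRoot f) (AdjoinRoot fm)) (z * e)
        = (LinearMap.toSpanSingleton (AdjoinRoot f) (AdjoinRoot fm) (z * e)).comp ε.toLinearMap := by
      ext a
      show (z * e) * a = LinearMap.toSpanSingleton (AdjoinRoot f) (AdjoinRoot fm) (z * e) (ε a)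
      rw [LinearMap.toSpanSingleton_apply, mul_assoc, hE a, mul_smul_comm]
    rw [Algebra.trace_apply, hop, LinearMap.trace_comp_comm']
    have hcomp : ε.toLinearMap ∘ₗ LinearMap.toSpanSingleton (AdjoinRoot f) (AdjoinRoot fm) (z * e)
        = ε (z * e) • LinearMap.id := by
      ext c
      simp [LinearMap.toSpanSingleton_apply, mul_comm]
    rw [hcomp, _root_.map_smul, LinearMap.trace_id]
    simp [_root_.map_mul, hεe, Module.finrank_self, smul_eq_mul]
  -- the key duality identity
  have key : ∀ u : (AdjoinRoot f),
      (∑ j : Fin n, algebraMap k (AdjoinRoot f) (Algebra.trace k (AdjoinRoot f) (u * θ ^ (j : ℕ) * dm))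
        * g.coeff (j : ℕ)) = u := by
    intro u
    have h1 : ∀ j : Fin n, algebraMap k (AdjoinRoot f) (Algebra.trace k (AdjoinRoot f) (u * θ ^ (j : ℕ) * dm))
        = Algebra.trace (AdjoinRoot f) (AdjoinRoot fm) (σ (u * dm) * θ' ^ (j : ℕ)) := by
      intro j
      rw [← htrcompat]
      congr 1
      rw [show u * θ ^ (j : ℕ) * dm = (u * dm) * θ ^ (j : ℕ) by ring, _root_.map_mul, _root_.map_pow, hσθ]
    calc (∑ j : Fin n, algebraMap k (AdjoinRoot f) (Algebra.trace k (AdjoinRoot f) (u * θ ^ (j : ℕ) * dm))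
          * g.coeff (j : ℕ))
        = ∑ j : Fin n, Algebra.trace (AdjoinRoot f) (AdjoinRoot fm) (g.coeff (j : ℕ) • (σ (u * dm) * θ' ^ (j : ℕ))) := by
          refine Finset.sum_congr rfl fun j _ => ?_
          rw [h1 j, _root_.map_smul, smul_eq_mul, mul_comm]
    _ = Algebra.trace (AdjoinRoot f) (AdjoinRoot fm) (σ (u * dm) * aeval θ' g) := by
          rw [← _root_.map_sum]
          congr 1
          rw [Polynomial.aeval_eq_sum_range' hgdeg θ', ← Fin.sum_univ_eq_sum_range
            (fun i => g.coeff i • θ' ^ i) n, Finset.mul_sum]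
          refine Finset.sum_congr rfl fun j _ => ?_
          exact (mul_smul_comm _ _ _).symm
    _ = Algebra.trace (AdjoinRoot f) (AdjoinRoot fm) (σ u * e) := by
          congr 1
          rw [hedef, _root_.map_mul]
          ring
    _ = u := by rw [htr, hεσ]
  -- entries of G
  have hGentry : ∀ i j : Fin n,
      G i j = Algebra.trace k (AdjoinRoot f) (((ξ : (AdjoinRoot f)) * θ ^ (i : ℕ)) * θ ^ (j : ℕ) * dm) := by
    intro i j
    rw [hG i j]
    congr 1
    rw [hdmdef, pow_add]
    rw [show (ξ : (AdjoinRoot f)) * (θ ^ (i : ℕ) * θ ^ (j : ℕ)) * d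
        = ((ξ : (AdjoinRoot f)) * θ ^ (i : ℕ) * θ ^ (j : ℕ)) * d by ring]
    rw [mul_smul_comm]
  have key' : ∀ i : Fin n,
      (∑ j : Fin n, algebraMap k (AdjoinRoot f) (G i j) * g.coeff (j : ℕ)) = (ξ : (AdjoinRoot f)) * θ ^ (i : ℕ) := by
    intro i
    rw [← key ((ξ : (AdjoinRoot f)) * θ ^ (i : ℕ))]
    refine Finset.sum_congr rfl fun j _ => ?_
    rw [hGentry i j]
  -- invertibility of G
  have hGdet : IsUnit G.det := by
    have hMxU : IsUnit (Algebra.leftMulMatrix bL (ξ : (AdjoinRoot f))) := ξ.isUnit.map (Algebra.leftMulMatrix bL)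
    have hmat : G * (Matrix.of fun m j : Fin n => bL.repr (g.coeff (j : ℕ)) m).transpose
        = (Algebra.leftMulMatrix bL (ξ : (AdjoinRoot f))).transpose := by
      ext i m
      rw [Matrix.mul_apply]
      simp only [Matrix.transpose_apply, Matrix.of_apply]
      have h := congrArg (fun z => bL.repr z m) (key' i)
      simp only [_root_.map_sum, ← Algebra.smul_def, _root_.map_smul, Finsupp.finset_sum_apply, Finsupp.smul_apply, smul_eq_mul] at h
      rw [h, Algebra.leftMulMatrix_eq_repr_mul]
      congr 2
      rw [hbL i]
    have h2 : IsUnit (G * (Matrix.of fun m j : Fin n =>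
        bL.repr (g.coeff (j : ℕ)) m).transpose).det := by
      rw [hmat, Matrix.det_transpose]
      exact (Matrix.isUnit_iff_isUnit_det _).mp hMxU
    rw [Matrix.det_mul] at h2
    exact isUnit_of_mul_isUnit_left h2
  set Gm := G.map (algebraMap k (AdjoinRoot f)) with hGLdef
  have hGLdet : IsUnit Gm.det := by
    have := hGdet.map (algebraMap k (AdjoinRoot f))
    rwa [RingHom.map_det] at this
  -- the explicit solution vector
  set v0 : Fin n → (AdjoinRoot f) := fun j => ((ξ⁻¹ : (AdjoinRoot f)ˣ) : (AdjoinRoot f)) * g.coeff (j : ℕ) with hv0def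
  have hGv0 : Gm *ᵥ v0 = fun i : Fin n => θ ^ (i : ℕ) := by
    funext i
    show ∑ j, Gm i j * v0 j = θ ^ (i : ℕ)
    calc ∑ j, Gm i j * v0 j
        = ((ξ⁻¹ : (AdjoinRoot f)ˣ) : (AdjoinRoot f)) * ∑ j, algebraMap k (AdjoinRoot f) (G i j) * g.coeff (j : ℕ) := by
          rw [Finset.mul_sum]
          refine Finset.sum_congr rfl fun j _ => ?_
          rw [hGLdef, Matrix.map_apply, hv0def]
          ring
    _ = θ ^ (i : ℕ) := by
          rw [key' i, ← mul_assoc]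
          simp
  have hveq : v = v0 := by
    rw [hv, ← hGv0, Matrix.mulVec_mulVec, Matrix.nonsing_inv_mul Gm hGLdet, Matrix.one_mulVec]
  -- entries of H
  have hHentry : ∀ i j : Fin n,
      H i j = Algebra.trace k (AdjoinRoot f) (((ξ : (AdjoinRoot f)) * θ ^ ((i : ℕ) + 1)) * θ ^ (j : ℕ) * dm) := by
    intro i j
    rw [hH, Matrix.mul_apply]
    calc ∑ m, G i m * Θ m j
        = ∑ m, Algebra.trace k (AdjoinRoot f) (Θ m j • (((ξ : (AdjoinRoot f)) * θ ^ (i : ℕ)) * θ ^ (m : ℕ) * dm)) := by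
          refine Finset.sum_congr rfl fun m _ => ?_
          rw [hGentry i m, _root_.map_smul, smul_eq_mul, mul_comm]
    _ = Algebra.trace k (AdjoinRoot f) (((ξ : (AdjoinRoot f)) * θ ^ ((i : ℕ) + 1)) * θ ^ (j : ℕ) * dm) := by
          rw [← _root_.map_sum]
          congr 1
          have hsum : ∑ m : Fin n, Θ m j • (((ξ : (AdjoinRoot f)) * θ ^ (i : ℕ)) * θ ^ (m : ℕ) * dm)
              = ((ξ : (AdjoinRoot f)) * θ ^ (i : ℕ)) * θ ^ ((j : ℕ) + 1) * dm := by
            rw [hΘ j]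
            rw [Finset.mul_sum, Finset.sum_mul]
            refine Finset.sum_congr rfl fun m _ => ?_
            rw [Algebra.smul_def]
            ring
          rw [hsum]
          ring
  -- first conclusion
  have part1 : (θ • Gm - H.map (algebraMap k (AdjoinRoot f))) *ᵥ v = 0 := by
    funext i
    have hHv : (H.map (algebraMap k (AdjoinRoot f)) *ᵥ v) i = θ ^ ((i : ℕ) + 1) := by
      rw [hveq]
      show ∑ j, (H.map (algebraMap k (AdjoinRoot f))) i j * v0 j = θ ^ ((i : ℕ) + 1)
      calc ∑ j, (H.map (algebraMap k (AdjoinRoot f))) i j * v0 j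
          = ((ξ⁻¹ : (AdjoinRoot f)ˣ) : (AdjoinRoot f))
              * ∑ j, algebraMap k (AdjoinRoot f) (H i j) * g.coeff (j : ℕ) := by
            rw [Finset.mul_sum]
            refine Finset.sum_congr rfl fun j _ => ?_
            rw [Matrix.map_apply, hv0def]
            ring
      _ = ((ξ⁻¹ : (AdjoinRoot f)ˣ) : (AdjoinRoot f)) * ((ξ : (AdjoinRoot f)) * θ ^ ((i : ℕ) + 1)) := by
            congr 1
            rw [← key ((ξ : (AdjoinRoot f)) * θ ^ ((i : ℕ) + 1))]
            refine Finset.sum_congr rfl fun j _ => ?_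
            rw [hHentry i j]
      _ = θ ^ ((i : ℕ) + 1) := by
            rw [← mul_assoc]
            simp
    have hGv : ((θ • Gm) *ᵥ v) i = θ ^ ((i : ℕ) + 1) := by
      rw [Matrix.smul_mulVec, hveq, hGv0]
      simp [pow_succ, mul_comm]
    rw [Matrix.sub_mulVec, Pi.sub_apply, hGv, hHv, sub_self, Pi.zero_apply]
  -- second conclusion
  have part2 : v ⬝ᵥ (Gm *ᵥ v) = f.leadingCoeff⁻¹ •
      (aeval θ (derivative f) * ((ξ⁻¹ : (AdjoinRoot f)ˣ) : (AdjoinRoot f))) := by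
    rw [hveq, hGv0]
    show ∑ j, v0 j * θ ^ (j : ℕ) = _
    calc ∑ j : Fin n, v0 j * θ ^ (j : ℕ)
        = ((ξ⁻¹ : (AdjoinRoot f)ˣ) : (AdjoinRoot f)) * ∑ j : Fin n, g.coeff (j : ℕ) * θ ^ (j : ℕ) := by
          rw [Finset.mul_sum]
          refine Finset.sum_congr rfl fun j _ => ?_
          rw [hv0def]
          ring
    _ = ((ξ⁻¹ : (AdjoinRoot f)ˣ) : (AdjoinRoot f)) * eval θ g := by
          congr 1
          rw [Polynomial.eval_eq_sum_range' hgdeg θ,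
            ← Fin.sum_univ_eq_sum_range (fun j => g.coeff j * θ ^ j) n]
    _ = _ := by
          rw [hgθ, Algebra.smul_def]
          ring
  exact ⟨part1, part2⟩
end

section
/- Let R be a commutative ring, let f_0, …, f_6 ∈ R, and let θ ∈ R. Then Pf(A(θ)) = 6f₆θ⁵ + 5f₅θ⁴ + 4f₄θ³ + 3f₃θ² + 2f₂θ + f₁ (the formal derivative f'(θ)), and consequently A(θ)·A(θ)* = A(θ)*·A(θ) = f'(θ)·I₄. -/
set_option maxHeartbeats 1000000


open Matrix

/-- For a `4×4` skew-symmetric matrix `A = (A_{ij})`, the matrix `A*`. -/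
def starMat {R : Type*} [CommRing R] (A : Matrix (Fin 4) (Fin 4) R) :
    Matrix (Fin 4) (Fin 4) R :=
  !![0, A 3 2, A 1 3, A 2 1;
     A 2 3, 0, A 3 0, A 0 2;
     A 3 1, A 0 3, 0, A 1 0;
     A 1 2, A 2 0, A 0 1, 0]

/-- The Pfaffian `Pf(A) = A₁₂A₃₄ − A₁₃A₂₄ + A₁₄A₂₃` of a `4×4` skew-symmetric matrix. -/
def pf4 {R : Type*} [CommRing R] (A : Matrix (Fin 4) (Fin 4) R) : R :=
  A 0 1 * A 2 3 - A 0 2 * A 1 3 + A 0 3 * A 1 2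

/-- The skew-symmetric matrix `A(θ)` of (2.9), built from
`h₃(θ), h₄(θ), h₅(θ)` for `f = f₆x⁶+⋯+f₀`. -/
def Amat {R : Type*} [CommRing R] (f1 f2 f3 f4 f5 f6 θ : R) :
    Matrix (Fin 4) (Fin 4) R :=
  let h3 := 2 * f6 * θ ^ 3 + f5 * θ ^ 2
  let h4 := 2 * f6 * θ ^ 4 + 2 * f5 * θ ^ 3 + 2 * f4 * θ ^ 2 + f3 * θ
  let h5 := 2 * f6 * θ ^ 5 + 2 * f5 * θ ^ 4 + 2 * f4 * θ ^ 3 + 2 * f3 * θ ^ 2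
      + 2 * f2 * θ + f1
  !![0, h5, h4, θ ^ 2;
     -h5, 0, h3, -θ;
     -h4, -h3, 0, 1;
     -θ ^ 2, θ, -1, 0]

/-- Equation (2.12): `Pf(A(θ)) = f'(θ)`, and hence
`A(θ)A(θ)* = A(θ)*A(θ) = f'(θ)·I₄`. -/
theorem stmt_4 (R : Type*) [CommRing R] (f0 f1 f2 f3 f4 f5 f6 θ : R) :
    pf4 (Amat f1 f2 f3 f4 f5 f6 θ)
      = 6 * f6 * θ ^ 5 + 5 * f5 * θ ^ 4 + 4 * f4 * θ ^ 3 + 3 * f3 * θ ^ 2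
        + 2 * f2 * θ + f1 ∧
    Amat f1 f2 f3 f4 f5 f6 θ * starMat (Amat f1 f2 f3 f4 f5 f6 θ)
      = (6 * f6 * θ ^ 5 + 5 * f5 * θ ^ 4 + 4 * f4 * θ ^ 3 + 3 * f3 * θ ^ 2
          + 2 * f2 * θ + f1) • (1 : Matrix (Fin 4) (Fin 4) R) ∧
    starMat (Amat f1 f2 f3 f4 f5 f6 θ) * Amat f1 f2 f3 f4 f5 f6 θ
      = (6 * f6 * θ ^ 5 + 5 * f5 * θ ^ 4 + 4 * f4 * θ ^ 3 + 3 * f3 * θ ^ 2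
          + 2 * f2 * θ + f1) • (1 : Matrix (Fin 4) (Fin 4) R) := by
  refine ⟨?_, ?_, ?_⟩
  · simp [Amat, pf4]
    ring
  all_goals
    ext i j
    fin_cases i <;> fin_cases j <;>
      simp [Amat, starMat, Matrix.mul_apply, Fin.sum_univ_four, Matrix.one_apply] <;> ring
end

section
/- Let R be a commutative ring, let f₆, θ₁, …, θ₆ ∈ R, and let f₀, …, f₅ ∈ R be the coefficients determined by f₆·∏_{i=1}^{6}(x−θᵢ) = f₆x⁶+f₅x⁵+f₄x⁴+f₃x³+f₂x²+f₁x+f₀. Write Aᵢ = A(θᵢ). Then for all i ≠ j one has Aᵢ* Aⱼ = − Aⱼ* Aᵢ. -/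
open Matrix Polynomial
set_option maxHeartbeats 1600000

theorem key_anticomm {R : Type*} [CommRing R] (f1 f2 f3 f4 f5 f6 a b c d e g : R)
    (h5 : f5 = -(f6 * (a + b + c + d + e + g)))
    (h4 : f4 = f6 * (a * b + a * c + a * d + a * e + a * g + b * c + b * d + b * e + b * g + c * d + c * e + c * g + d * e + d * g + e * g))
    (h3 : f3 = -(f6 * (a * b * c + a * b * d + a * b * e + a * b * g + a * c * d + a * c * e + a * c * g + a * d * e + a * d * g + a * e * g + b * c * d + b * c * e + b * c * g + b * d * e + b * d * g + b * e * g + c * d * e + c * d * g + c * e * g + d * e * g)))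
    (h2 : f2 = f6 * (a * b * c * d + a * b * c * e + a * b * c * g + a * b * d * e + a * b * d * g + a * b * e * g + a * c * d * e + a * c * d * g + a * c * e * g + a * d * e * g + b * c * d * e + b * c * d * g + b * c * e * g + b * d * e * g + c * d * e * g))
    (h1 : f1 = -(f6 * (a * b * c * d * e + a * b * c * d * g + a * b * c * e * g + a * b * d * e * g + a * c * d * e * g + b * c * d * e * g))) :
    starMat (Amat f1 f2 f3 f4 f5 f6 a) * Amat f1 f2 f3 f4 f5 f6 b
      = -(starMat (Amat f1 f2 f3 f4 f5 f6 b) * Amat f1 f2 f3 f4 f5 f6 a) := by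
  ext i j
  fin_cases i <;> fin_cases j <;>
    simp [starMat, Amat, Matrix.mul_apply, Fin.sum_univ_four, Matrix.neg_apply] <;>
    (subst h1 h2 h3 h4 h5; ring)

/-- Equation (2.13): writing `Aᵢ = A(θᵢ)` for the roots `θ₁,…,θ₆` of `f`,
one has `Aᵢ* Aⱼ = − Aⱼ* Aᵢ` for all `i ≠ j`. -/
theorem stmt_5 (R : Type*) [CommRing R] (f0 f1 f2 f3 f4 f5 f6 : R) (θ : Fin 6 → R)
    (hf : C f6 * ∏ i : Fin 6, (X - C (θ i))
      = C f6 * X ^ 6 + C f5 * X ^ 5 + C f4 * X ^ 4 + C f3 * X ^ 3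
        + C f2 * X ^ 2 + C f1 * X + C f0) :
    ∀ i j : Fin 6, i ≠ j →
      starMat (Amat f1 f2 f3 f4 f5 f6 (θ i)) * Amat f1 f2 f3 f4 f5 f6 (θ j)
        = -(starMat (Amat f1 f2 f3 f4 f5 f6 (θ j)) * Amat f1 f2 f3 f4 f5 f6 (θ i)) := by
  have hexp : (∏ i : Fin 6, (X - C (θ i))) = X ^ 6 + C (-(θ 0 + θ 1 + θ 2 + θ 3 + θ 4 + θ 5)) * X ^ 5 + C ((θ 0 * θ 1 + θ 0 * θ 2 + θ 0 * θ 3 + θ 0 * θ 4 + θ 0 * θ 5 + θ 1 * θ 2 + θ 1 * θ 3 + θ 1 * θ 4 + θ 1 * θ 5 + θ 2 * θ 3 + θ 2 * θ 4 + θ 2 * θ 5 + θ 3 * θ 4 + θ 3 * θ 5 + θ 4 * θ 5)) * X ^ 4 + C (-(θ 0 * θ 1 * θ 2 + θ 0 * θ 1 * θ 3 + θ 0 * θ 1 * θ 4 + θ 0 * θ 1 * θ 5 + θ 0 * θ 2 * θ 3 + θ 0 * θ 2 * θ 4 + θ 0 * θ 2 * θ 5 + θ 0 * θ 3 * θ 4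 + θ 0 * θ 3 * θ 5 + θ 0 * θ 4 * θ 5 + θ 1 * θ 2 * θ 3 + θ 1 * θ 2 * θ 4 + θ 1 * θ 2 * θ 5 + θ 1 * θ 3 * θ 4 + θ 1 * θ 3 * θ 5 + θ 1 * θ 4 * θ 5 + θ 2 * θ 3 * θ 4 + θ 2 * θ 3 * θ 5 + θ 2 * θ 4 * θ 5 + θ 3 * θ 4 * θ 5)) * X ^ 3 + C ((θ 0 * θ 1 * θ 2 * θ 3 + θ 0 * θ 1 * θ 2 * θ 4 + θ 0 * θ 1 * θ 2 * θ 5 + θ 0 * θ 1 * θ 3 * θ 4 + θ 0 * θ 1 * θ 3 * θ 5 + θ 0 * θ 1 * θ 4 * θ 5 + θ 0 * θ 2 * θ 3 * θ 4 + θ 0 * θ 2 * θ 3 * θ 5 + θ 0 * θ 2 * θ 4 * θ 5 + θ 0 * θ 3 * θ 4 * θ 5 + θ 1 * θ 2 * θ 3 * θ 4 + θ 1 * θ 2 * θ 3 * θ 5 + θ 1 * θ 2 * θ 4 * θ 5 + θ 1 * θ 3 * θ 4 * θ 5 + θ 2 * θ 3 * θ 4 * θ 5)) * X ^ 2 + C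 (-(θ 0 * θ 1 * θ 2 * θ 3 * θ 4 + θ 0 * θ 1 * θ 2 * θ 3 * θ 5 + θ 0 * θ 1 * θ 2 * θ 4 * θ 5 + θ 0 * θ 1 * θ 3 * θ 4 * θ 5 + θ 0 * θ 2 * θ 3 * θ 4 * θ 5 + θ 1 * θ 2 * θ 3 * θ 4 * θ 5)) * X ^ 1 + C ((θ 0 * θ 1 * θ 2 * θ 3 * θ 4 * θ 5)) := by
    simp only [Fin.prod_univ_six, C_add, C_mul, C_neg]
    ring
  rw [hexp] at hf
  have hc5 := congrArg (fun p => Polynomial.coeff p 5) hf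
  simp only [coeff_add, coeff_C_mul, coeff_X_pow, coeff_C, coeff_X, mul_ite, mul_one,
    mul_zero, add_zero, zero_add] at hc5
  norm_num at hc5
  have hc4 := congrArg (fun p => Polynomial.coeff p 4) hf
  simp only [coeff_add, coeff_C_mul, coeff_X_pow, coeff_C, coeff_X, mul_ite, mul_one,
    mul_zero, add_zero, zero_add] at hc4
  norm_num at hc4
  have hc3 := congrArg (fun p => Polynomial.coeff p 3) hf
  simp only [coeff_add, coeff_C_mul, coeff_X_pow, coeff_C, coeff_X, mul_ite, mul_one,
    mul_zero, add_zero, zero_add] at hc3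
  norm_num at hc3
  have hc2 := congrArg (fun p => Polynomial.coeff p 2) hf
  simp only [coeff_add, coeff_C_mul, coeff_X_pow, coeff_C, coeff_X, mul_ite, mul_one,
    mul_zero, add_zero, zero_add] at hc2
  norm_num at hc2
  have hc1 := congrArg (fun p => Polynomial.coeff p 1) hf
  simp only [coeff_add, coeff_C_mul, coeff_X_pow, coeff_C, coeff_X, mul_ite, mul_one,
    mul_zero, add_zero, zero_add] at hc1
  norm_num at hc1
  intro i j hij
  fin_cases i <;> fin_cases j
  · exact absurd rfl hij
  · exact key_anticomm f1 f2 f3 f4 f5 f6 (θ 0) (θ 1) (θ 2) (θ 3) (θ 4) (θ 5)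
      (by linear_combination -hc5) (by linear_combination -hc4) (by linear_combination -hc3) (by linear_combination -hc2) (by linear_combination -hc1)
  · exact key_anticomm f1 f2 f3 f4 f5 f6 (θ 0) (θ 2) (θ 1) (θ 3) (θ 4) (θ 5)
      (by linear_combination -hc5) (by linear_combination -hc4) (by linear_combination -hc3) (by linear_combination -hc2) (by linear_combination -hc1)
  · exact key_anticomm f1 f2 f3 f4 f5 f6 (θ 0) (θ 3) (θ 1) (θ 2) (θ 4) (θ 5)
      (by linear_combination -hc5) (by linear_combination -hc4) (by linear_combination -hc3) (by linear_combination -hc2) (by linear_combination -hc1)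
  · exact key_anticomm f1 f2 f3 f4 f5 f6 (θ 0) (θ 4) (θ 1) (θ 2) (θ 3) (θ 5)
      (by linear_combination -hc5) (by linear_combination -hc4) (by linear_combination -hc3) (by linear_combination -hc2) (by linear_combination -hc1)
  · exact key_anticomm f1 f2 f3 f4 f5 f6 (θ 0) (θ 5) (θ 1) (θ 2) (θ 3) (θ 4)
      (by linear_combination -hc5) (by linear_combination -hc4) (by linear_combination -hc3) (by linear_combination -hc2) (by linear_combination -hc1)
  · exact key_anticomm f1 f2 f3 f4 f5 f6 (θ 1) (θ 0) (θ 2) (θ 3) (θ 4) (θ 5)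
      (by linear_combination -hc5) (by linear_combination -hc4) (by linear_combination -hc3) (by linear_combination -hc2) (by linear_combination -hc1)
  · exact absurd rfl hij
  · exact key_anticomm f1 f2 f3 f4 f5 f6 (θ 1) (θ 2) (θ 0) (θ 3) (θ 4) (θ 5)
      (by linear_combination -hc5) (by linear_combination -hc4) (by linear_combination -hc3) (by linear_combination -hc2) (by linear_combination -hc1)
  · exact key_anticomm f1 f2 f3 f4 f5 f6 (θ 1) (θ 3) (θ 0) (θ 2) (θ 4) (θ 5)
      (by linear_combination -hc5) (by linear_combination -hc4) (by linear_combination -hc3) (by linear_combination -hc2) (by linear_combination -hc1)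
  · exact key_anticomm f1 f2 f3 f4 f5 f6 (θ 1) (θ 4) (θ 0) (θ 2) (θ 3) (θ 5)
      (by linear_combination -hc5) (by linear_combination -hc4) (by linear_combination -hc3) (by linear_combination -hc2) (by linear_combination -hc1)
  · exact key_anticomm f1 f2 f3 f4 f5 f6 (θ 1) (θ 5) (θ 0) (θ 2) (θ 3) (θ 4)
      (by linear_combination -hc5) (by linear_combination -hc4) (by linear_combination -hc3) (by linear_combination -hc2) (by linear_combination -hc1)
  · exact key_anticomm f1 f2 f3 f4 f5 f6 (θ 2) (θ 0) (θ 1) (θ 3) (θ 4) (θ 5)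
      (by linear_combination -hc5) (by linear_combination -hc4) (by linear_combination -hc3) (by linear_combination -hc2) (by linear_combination -hc1)
  · exact key_anticomm f1 f2 f3 f4 f5 f6 (θ 2) (θ 1) (θ 0) (θ 3) (θ 4) (θ 5)
      (by linear_combination -hc5) (by linear_combination -hc4) (by linear_combination -hc3) (by linear_combination -hc2) (by linear_combination -hc1)
  · exact absurd rfl hij
  · exact key_anticomm f1 f2 f3 f4 f5 f6 (θ 2) (θ 3) (θ 0) (θ 1) (θ 4) (θ 5)
      (by linear_combination -hc5) (by linear_combination -hc4) (by linear_combination -hc3) (by linear_combination -hc2) (by linear_combination -hc1)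
  · exact key_anticomm f1 f2 f3 f4 f5 f6 (θ 2) (θ 4) (θ 0) (θ 1) (θ 3) (θ 5)
      (by linear_combination -hc5) (by linear_combination -hc4) (by linear_combination -hc3) (by linear_combination -hc2) (by linear_combination -hc1)
  · exact key_anticomm f1 f2 f3 f4 f5 f6 (θ 2) (θ 5) (θ 0) (θ 1) (θ 3) (θ 4)
      (by linear_combination -hc5) (by linear_combination -hc4) (by linear_combination -hc3) (by linear_combination -hc2) (by linear_combination -hc1)
  · exact key_anticomm f1 f2 f3 f4 f5 f6 (θ 3) (θ 0) (θ 1) (θ 2) (θ 4) (θ 5)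
      (by linear_combination -hc5) (by linear_combination -hc4) (by linear_combination -hc3) (by linear_combination -hc2) (by linear_combination -hc1)
  · exact key_anticomm f1 f2 f3 f4 f5 f6 (θ 3) (θ 1) (θ 0) (θ 2) (θ 4) (θ 5)
      (by linear_combination -hc5) (by linear_combination -hc4) (by linear_combination -hc3) (by linear_combination -hc2) (by linear_combination -hc1)
  · exact key_anticomm f1 f2 f3 f4 f5 f6 (θ 3) (θ 2) (θ 0) (θ 1) (θ 4) (θ 5)
      (by linear_combination -hc5) (by linear_combination -hc4) (by linear_combination -hc3) (by linear_combination -hc2) (by linear_combination -hc1)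
  · exact absurd rfl hij
  · exact key_anticomm f1 f2 f3 f4 f5 f6 (θ 3) (θ 4) (θ 0) (θ 1) (θ 2) (θ 5)
      (by linear_combination -hc5) (by linear_combination -hc4) (by linear_combination -hc3) (by linear_combination -hc2) (by linear_combination -hc1)
  · exact key_anticomm f1 f2 f3 f4 f5 f6 (θ 3) (θ 5) (θ 0) (θ 1) (θ 2) (θ 4)
      (by linear_combination -hc5) (by linear_combination -hc4) (by linear_combination -hc3) (by linear_combination -hc2) (by linear_combination -hc1)
  · exact key_anticomm f1 f2 f3 f4 f5 f6 (θ 4) (θ 0) (θ 1) (θ 2) (θ 3) (θ 5)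
      (by linear_combination -hc5) (by linear_combination -hc4) (by linear_combination -hc3) (by linear_combination -hc2) (by linear_combination -hc1)
  · exact key_anticomm f1 f2 f3 f4 f5 f6 (θ 4) (θ 1) (θ 0) (θ 2) (θ 3) (θ 5)
      (by linear_combination -hc5) (by linear_combination -hc4) (by linear_combination -hc3) (by linear_combination -hc2) (by linear_combination -hc1)
  · exact key_anticomm f1 f2 f3 f4 f5 f6 (θ 4) (θ 2) (θ 0) (θ 1) (θ 3) (θ 5)
      (by linear_combination -hc5) (by linear_combination -hc4) (by linear_combination -hc3) (by linear_combination -hc2) (by linear_combination -hc1)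
  · exact key_anticomm f1 f2 f3 f4 f5 f6 (θ 4) (θ 3) (θ 0) (θ 1) (θ 2) (θ 5)
      (by linear_combination -hc5) (by linear_combination -hc4) (by linear_combination -hc3) (by linear_combination -hc2) (by linear_combination -hc1)
  · exact absurd rfl hij
  · exact key_anticomm f1 f2 f3 f4 f5 f6 (θ 4) (θ 5) (θ 0) (θ 1) (θ 2) (θ 3)
      (by linear_combination -hc5) (by linear_combination -hc4) (by linear_combination -hc3) (by linear_combination -hc2) (by linear_combination -hc1)
  · exact key_anticomm f1 f2 f3 f4 f5 f6 (θ 5) (θ 0) (θ 1) (θ 2) (θ 3) (θ 4)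
      (by linear_combination -hc5) (by linear_combination -hc4) (by linear_combination -hc3) (by linear_combination -hc2) (by linear_combination -hc1)
  · exact key_anticomm f1 f2 f3 f4 f5 f6 (θ 5) (θ 1) (θ 0) (θ 2) (θ 3) (θ 4)
      (by linear_combination -hc5) (by linear_combination -hc4) (by linear_combination -hc3) (by linear_combination -hc2) (by linear_combination -hc1)
  · exact key_anticomm f1 f2 f3 f4 f5 f6 (θ 5) (θ 2) (θ 0) (θ 1) (θ 3) (θ 4)
      (by linear_combination -hc5) (by linear_combination -hc4) (by linear_combination -hc3) (by linear_combination -hc2) (by linear_combination -hc1)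
  · exact key_anticomm f1 f2 f3 f4 f5 f6 (θ 5) (θ 3) (θ 0) (θ 1) (θ 2) (θ 4)
      (by linear_combination -hc5) (by linear_combination -hc4) (by linear_combination -hc3) (by linear_combination -hc2) (by linear_combination -hc1)
  · exact key_anticomm f1 f2 f3 f4 f5 f6 (θ 5) (θ 4) (θ 0) (θ 1) (θ 2) (θ 3)
      (by linear_combination -hc5) (by linear_combination -hc4) (by linear_combination -hc3) (by linear_combination -hc2) (by linear_combination -hc1)
  · exact absurd rfl hij
end

section
/- Let k be a field of characteristic ≠ 2 and f(x) = f₆x⁶+f₅x⁵+f₄x⁴+f₃x³+f₂x²+f₁x+f₀ ∈ k[x] with f₆ ≠ 0. Let K be a field extension of k and θ ∈ K with f(θ) = 0 and f'(θ) ≠ 0. Then the 6×6 matrix θ𝐆 − 𝐇 (with 𝐆, 𝐇 the matrices of the standard model, viewed over K) has rank 5, and its kernel is spanned by the vector (h₅(θ), h₄(θ), h₃(θ), θ², θ, 1)ᵀ. -/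
open Matrix

@[simp] lemma cons_val_five' {α : Type*} (x : α) (u : Fin 5 → α) :
    Matrix.vecCons x u 5 = u 4 := rfl

lemma quad_det {R : Type*} [Field R] (h2 : (2:R) ≠ 0) {n : ℕ}
    (A B : Matrix (Fin n) (Fin n) R) (hA : A.IsSymm) (hB : B.IsSymm)
    (h : ∀ u : Fin n → R, u ⬝ᵥ (A *ᵥ u) = u ⬝ᵥ (B *ᵥ u)) : A = B := by
  have hbil : ∀ (C : Matrix (Fin n) (Fin n) R) (i j : Fin n),
      (Pi.single i 1 : Fin n → R) ⬝ᵥ (C *ᵥ Pi.single j 1) = C i j := by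
    intro C i j
    rw [Matrix.mulVec_single, single_dotProduct]
    simp
  ext i j
  have hii := h (Pi.single i 1)
  have hjj := h (Pi.single j 1)
  have hij := h (Pi.single i 1 + Pi.single j 1)
  simp only [Matrix.mulVec_add, dotProduct_add, add_dotProduct, hbil] at hii hjj hij
  have hAs : A j i = A i j := hA.apply i j
  have hBs : B j i = B i j := hB.apply i j
  have : 2 * A i j = 2 * B i j := by
    rw [hAs, hBs] at hij
    linear_combination hij - hii - hjj
  exact mul_left_cancel₀ h2 this

lemma rank_eq_five {K : Type*} [Field K] (M : Matrix (Fin 6) (Fin 6) K) (v : Fin 6 → K)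
    (hv : v ≠ 0) (h : ∀ w, M *ᵥ w = 0 ↔ ∃ c : K, w = c • v) : M.rank = 5 := by
  have hker : LinearMap.ker M.mulVecLin = Submodule.span K {v} := by
    ext w
    rw [LinearMap.mem_ker, Matrix.mulVecLin_apply, h w, Submodule.mem_span_singleton]
    exact ⟨fun ⟨c, hc⟩ => ⟨c, hc.symm⟩, fun ⟨c, hc⟩ => ⟨c, hc.symm⟩⟩
  have hrk := LinearMap.finrank_range_add_finrank_ker M.mulVecLin
  rw [hker, finrank_span_singleton hv] at hrk
  have h6 : Module.finrank K (Fin 6 → K) = 6 := by simp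
  rw [Matrix.rank]
  omega

set_option maxHeartbeats 1000000 in
/-- Equation (2.21): for a root `θ` of `f` with `f'(θ) ≠ 0`, the matrix
`θ𝐆 − 𝐇` has rank `5` and its kernel is spanned by
`(h₅(θ), h₄(θ), h₃(θ), θ², θ, 1)ᵀ`. -/
theorem stmt_9 (k : Type*) [Field k] (h2 : (2 : k) ≠ 0)
    (f0 f1 f2 f3 f4 f5 f6 : k) (hf6 : f6 ≠ 0)
    (MG MH : Matrix (Fin 6) (Fin 6) k)
    (hMGsymm : MG.IsSymm) (hMHsymm : MH.IsSymm)
    (hMG : ∀ u : Fin 6 → k,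
      u 0 * u 5 + u 1 * u 4 + u 2 * u 3 = (1 / 2) * (u ⬝ᵥ (MG *ᵥ u)))
    (hMH : ∀ u : Fin 6 → k,
      u 0 * u 4 + u 1 * u 3 - f0 * u 5 ^ 2 - f1 * u 4 * u 5 - f2 * u 4 ^ 2
          - f3 * u 3 * u 4 - f4 * u 3 ^ 2 + (1 / 4) * f6⁻¹ * (u 2 - f5 * u 3) ^ 2
        = (1 / 2) * (u ⬝ᵥ (MH *ᵥ u)))
    (K : Type*) [Field K] [Algebra k K] (θ : K)
    (hroot : algebraMap k K f6 * θ ^ 6 + algebraMap k K f5 * θ ^ 5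
        + algebraMap k K f4 * θ ^ 4 + algebraMap k K f3 * θ ^ 3
        + algebraMap k K f2 * θ ^ 2 + algebraMap k K f1 * θ + algebraMap k K f0 = 0)
    (hder : 6 * algebraMap k K f6 * θ ^ 5 + 5 * algebraMap k K f5 * θ ^ 4
        + 4 * algebraMap k K f4 * θ ^ 3 + 3 * algebraMap k K f3 * θ ^ 2
        + 2 * algebraMap k K f2 * θ + algebraMap k K f1 ≠ 0) :
    (θ • MG.map (algebraMap k K) - MH.map (algebraMap k K)).rank = 5 ∧
    ∀ w : Fin 6 → K,
      (θ • MG.map (algebraMap k K) - MH.map (algebraMap k K)) *ᵥ w = 0 ↔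
      ∃ c : K, w = c •
        ![2 * algebraMap k K f6 * θ ^ 5 + 2 * algebraMap k K f5 * θ ^ 4
            + 2 * algebraMap k K f4 * θ ^ 3 + 2 * algebraMap k K f3 * θ ^ 2
            + 2 * algebraMap k K f2 * θ + algebraMap k K f1,
          2 * algebraMap k K f6 * θ ^ 4 + 2 * algebraMap k K f5 * θ ^ 3
            + 2 * algebraMap k K f4 * θ ^ 2 + algebraMap k K f3 * θ,
          2 * algebraMap k K f6 * θ ^ 3 + algebraMap k K f5 * θ ^ 2,
          θ ^ 2, θ, 1] := by
  have h21 : (2:k) * (1/2) = 1 := by field_simp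
  have h4 : (4:k) ≠ 0 := by
    intro h
    apply h2
    have h22 : (2:k) * 2 = 0 := by rw [show (2:k)*2 = 4 by norm_num, h]
    rcases mul_eq_zero.mp h22 with h' | h' <;> exact h'
  -- identify MG
  have hMGeq : MG = !![0,0,0,0,0,1;0,0,0,0,1,0;0,0,0,1,0,0;0,0,1,0,0,0;0,1,0,0,0,0;1,0,0,0,0,0] := by
    apply quad_det h2 _ _ hMGsymm
    · rw [Matrix.IsSymm]; ext i j; fin_cases i <;> fin_cases j <;> rfl
    · intro u
      have key : u ⬝ᵥ (MG *ᵥ u) = 2 * (u 0 * u 5 + u 1 * u 4 + u 2 * u 3) := by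
        rw [hMG u, ← mul_assoc, h21, one_mul]
      rw [key]
      simp [Matrix.mulVec, dotProduct, Fin.sum_univ_six, Matrix.vecHead, Matrix.vecTail]
      ring
  have hMHeq : MH = !![0,0,0,0,1,0;
        0,0,0,1,0,0;
        0,0,(1/2)*f6⁻¹, -(1/2)*f6⁻¹*f5,0,0;
        0,1,-(1/2)*f6⁻¹*f5, -2*f4+(1/2)*f6⁻¹*f5^2, -f3, 0;
        1,0,0,-f3,-2*f2,-f1;
        0,0,0,0,-f1,-2*f0] := by
    apply quad_det h2 _ _ hMHsymm
    · rw [Matrix.IsSymm]; ext i j; fin_cases i <;> fin_cases j <;> rfl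
    · intro u
      have key : u ⬝ᵥ (MH *ᵥ u) = 2 * (u 0 * u 4 + u 1 * u 3 - f0 * u 5 ^ 2 - f1 * u 4 * u 5
          - f2 * u 4 ^ 2 - f3 * u 3 * u 4 - f4 * u 3 ^ 2
          + (1 / 4) * f6⁻¹ * (u 2 - f5 * u 3) ^ 2) := by
        rw [hMH u, ← mul_assoc, h21, one_mul]
      rw [key]
      simp [Matrix.mulVec, dotProduct, Fin.sum_univ_six, Matrix.vecHead, Matrix.vecTail]
      field_simp [hf6, h4]
      ring
  rw [hMGeq, hMHeq]
  have hinj : Function.Injective (algebraMap k K) := (algebraMap k K).injective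
  have hf6K : algebraMap k K f6 ≠ 0 := (map_ne_zero_iff _ hinj).mpr hf6
  have h2K : (2:K) ≠ 0 := by
    have hmap : algebraMap k K 2 = 2 := map_ofNat _ 2
    rw [← hmap]
    exact (map_ne_zero_iff _ hinj).mpr h2
  have hA6 : algebraMap k K f6 * (algebraMap k K f6)⁻¹ = 1 := mul_inv_cancel₀ hf6K
  have h2i : (2:K)⁻¹ * 2 = 1 := inv_mul_cancel₀ h2K
  suffices hiff : ∀ w : Fin 6 → K,
      ((θ • (!![0,0,0,0,0,1;0,0,0,0,1,0;0,0,0,1,0,0;0,0,1,0,0,0;0,1,0,0,0,0;1,0,0,0,0,0]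
          : Matrix (Fin 6) (Fin 6) k).map (algebraMap k K)
        - (!![0,0,0,0,1,0;
        0,0,0,1,0,0;
        0,0,(1/2)*f6⁻¹, -(1/2)*f6⁻¹*f5,0,0;
        0,1,-(1/2)*f6⁻¹*f5, -2*f4+(1/2)*f6⁻¹*f5^2, -f3, 0;
        1,0,0,-f3,-2*f2,-f1;
        0,0,0,0,-f1,-2*f0] : Matrix (Fin 6) (Fin 6) k).map (algebraMap k K)) *ᵥ w = 0 ↔
      ∃ c : K, w = c •
        ![2 * algebraMap k K f6 * θ ^ 5 + 2 * algebraMap k K f5 * θ ^ 4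
            + 2 * algebraMap k K f4 * θ ^ 3 + 2 * algebraMap k K f3 * θ ^ 2
            + 2 * algebraMap k K f2 * θ + algebraMap k K f1,
          2 * algebraMap k K f6 * θ ^ 4 + 2 * algebraMap k K f5 * θ ^ 3
            + 2 * algebraMap k K f4 * θ ^ 2 + algebraMap k K f3 * θ,
          2 * algebraMap k K f6 * θ ^ 3 + algebraMap k K f5 * θ ^ 2,
          θ ^ 2, θ, 1]) by
    refine ⟨rank_eq_five _ _ ?_ hiff, hiff⟩
    intro hv0
    have := congrFun hv0 5
    simp at this
  intro w
  constructor
  · intro hw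
    have e0 := congrFun hw 0
    have e1 := congrFun hw 1
    have e2 := congrFun hw 2
    have e3 := congrFun hw 3
    have e4 := congrFun hw 4
    simp [Matrix.mulVec, dotProduct, Fin.sum_univ_six, Matrix.vecHead, Matrix.vecTail,
      map_ofNat] at e0 e1 e2 e3 e4
    refine ⟨w 5, ?_⟩
    have hw4 : w 4 = θ * w 5 := by linear_combination -e0
    have hw3 : w 3 = θ^2 * w 5 := by linear_combination -e1 + θ * hw4
    have hw2 : w 2 = (2 * algebraMap k K f6 * θ^3 + algebraMap k K f5 * θ^2) * w 5 := by
      linear_combination (-2 * algebraMap k K f6) * e2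
        + (2 * algebraMap k K f6 * θ + algebraMap k K f5) * hw3
        + (algebraMap k K f5 * w 3 - w 2) * hA6
        + (algebraMap k K f6 * (algebraMap k K f6)⁻¹ * (algebraMap k K f5 * w 3 - w 2)) * h2i
    have hw1 : w 1 = (2 * algebraMap k K f6 * θ^4 + 2 * algebraMap k K f5 * θ^3
        + 2 * algebraMap k K f4 * θ^2 + algebraMap k K f3 * θ) * w 5 := by
      linear_combination (-1) * e3
        + (θ + (1/2) * (algebraMap k K f6)⁻¹ * algebraMap k K f5) * hw2
        + (2 * algebraMap k K f4 - (1/2) * (algebraMap k K f6)⁻¹ * (algebraMap k K f5)^2) * hw3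
        + algebraMap k K f3 * hw4
        + (algebraMap k K f5 * θ^3 * w 5) * hA6
        + (algebraMap k K f6 * (algebraMap k K f6)⁻¹ * algebraMap k K f5 * θ^3 * w 5) * h2i
    have hw0 : w 0 = (2 * algebraMap k K f6 * θ^5 + 2 * algebraMap k K f5 * θ^4
        + 2 * algebraMap k K f4 * θ^3 + 2 * algebraMap k K f3 * θ^2
        + 2 * algebraMap k K f2 * θ + algebraMap k K f1) * w 5 := by
      linear_combination (-1) * e4 + θ * hw1 + algebraMap k K f3 * hw3
        + 2 * algebraMap k K f2 * hw4
    funext i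
    fin_cases i
    · simp only [Pi.smul_apply, smul_eq_mul]
      simpa using by linear_combination hw0
    · simp only [Pi.smul_apply, smul_eq_mul]
      simpa using by linear_combination hw1
    · simp only [Pi.smul_apply, smul_eq_mul]
      simpa using by linear_combination hw2
    · simp only [Pi.smul_apply, smul_eq_mul]
      simpa using by linear_combination hw3
    · simp only [Pi.smul_apply, smul_eq_mul]
      simpa using by linear_combination hw4
    · simp
  · rintro ⟨c, rfl⟩
    funext i
    fin_cases i
    · simp [Matrix.mulVec, dotProduct, Fin.sum_univ_six, Matrix.vecHead, Matrix.vecTail,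
        map_ofNat]
      ring
    · simp [Matrix.mulVec, dotProduct, Fin.sum_univ_six, Matrix.vecHead, Matrix.vecTail,
        map_ofNat]
      ring
    · simp [Matrix.mulVec, dotProduct, Fin.sum_univ_six, Matrix.vecHead, Matrix.vecTail,
        map_ofNat]
      linear_combination (-(θ^3 * c)) * hA6
        + (-(algebraMap k K f6 * (algebraMap k K f6)⁻¹ * θ^3 * c)) * h2i
    · simp [Matrix.mulVec, dotProduct, Fin.sum_univ_six, Matrix.vecHead, Matrix.vecTail,
        map_ofNat]
      linear_combination (algebraMap k K f5 * θ^3 * c) * hA6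
        + (algebraMap k K f6 * (algebraMap k K f6)⁻¹ * algebraMap k K f5 * θ^3 * c) * h2i
    · simp [Matrix.mulVec, dotProduct, Fin.sum_univ_six, Matrix.vecHead, Matrix.vecTail,
        map_ofNat]
      ring
    · simp [Matrix.mulVec, dotProduct, Fin.sum_univ_six, Matrix.vecHead, Matrix.vecTail,
        map_ofNat]
      linear_combination 2 * c * hroot
end

section
/- Let V be a finite-dimensional vector space over 𝔽₂, let β : V × V → 𝔽₂ be a symmetric bilinear form, and let c ∈ V be such that β(x, x + c) = 0 for all x ∈ V. Then the rank of β (the dimension of V minus the dimension of the radical {v ∈ V : β(v, w) = 0 for all w}) is even if and only if β(c, c) = 0. -/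
private lemma zmod2_cases (a : ZMod 2) : a = 0 ∨ a = 1 := by revert a; decide
private lemma zmod2_add_eq_zero (a b : ZMod 2) : a + b = 0 ↔ a = b := by revert a b; decide
private lemma zmod2_add_self (a : ZMod 2) : a + a = 0 := by revert a; decide

universe u

private lemma stmt15_aux : ∀ (n : ℕ) (V : Type u) [AddCommGroup V] [Module (ZMod 2) V]
    [FiniteDimensional (ZMod 2) V], Module.finrank (ZMod 2) V ≤ n →
    ∀ (β : V →ₗ[ZMod 2] V →ₗ[ZMod 2] ZMod 2), (∀ x y : V, β x y = β y x) →
    ∀ c : V, (∀ x : V, β x (x + c) = 0) →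
    (Even (Module.finrank (ZMod 2) V - Module.finrank (ZMod 2) (LinearMap.ker β)) ↔
      β c c = 0) := by
  intro n
  induction n with
  | zero =>
    intro V _ _ _ hV β hs c hc
    have h0 : Module.finrank (ZMod 2) V = 0 := Nat.le_zero.mp hV
    have : Subsingleton V := Module.finrank_zero_iff.mp h0
    have hc0 : c = 0 := Subsingleton.elim c 0
    refine iff_of_true ?_ (by simp [hc0])
    rw [h0]; simp
  | succ n ih =>
    intro V _ _ _ hV β hs c hc
    -- basic consequence of hc
    have hd : ∀ x : V, β x x = β x c := by
      intro x
      have := hc x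
      rw [map_add] at this
      exact (zmod2_add_eq_zero _ _).mp this
    by_cases hβ : β = 0
    · subst hβ
      refine iff_of_true ?_ (by simp)
      rw [LinearMap.ker_zero, finrank_top, Nat.sub_self]
      exact Even.zero
    · by_cases hA : ∃ v : V, β v v ≠ 0
      · -- Case A: non-alternating, split off a 1-dim nondegenerate piece
        obtain ⟨v, hv⟩ := hA
        have hv1 : β v v = 1 := (zmod2_cases _).resolve_left hv
        set W : Submodule (ZMod 2) V := LinearMap.ker (β v) with hW
        -- β v c = 1
        have hvc : β v c = 1 := by rw [← hd v]; exact hv1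
        have hcv : β c v = 1 := by rw [hs]; exact hvc
        -- the restricted form
        set β' : W →ₗ[ZMod 2] W →ₗ[ZMod 2] ZMod 2 :=
          β.compl₁₂ W.subtype W.subtype with hβ'
        have happ : ∀ x y : W, β' x y = β (x : V) (y : V) := fun x y => rfl
        have hs' : ∀ x y : W, β' x y = β' y x := fun x y => hs _ _
        -- the new c
        have hcmem : c + v ∈ W := by
          have : β v (c + v) = 0 := by
            rw [map_add, hvc, hv1]; decide
          exact this
        set c' : W := ⟨c + v, hcmem⟩ with hc'def
        have hc' : ∀ x : W, β' x (x + c') = 0 := by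
          intro x
          have hxv : β (x : V) v = 0 := by rw [hs]; exact x.2
          show β (x : V) ((x : V) + (c + v)) = 0
          rw [map_add, map_add, hd x, hxv, add_zero, zmod2_add_self]
        -- finrank W = finrank V - 1
        have hsurj : Function.Surjective (β v) := by
          intro a
          refine ⟨a • v, ?_⟩
          rw [map_smul, hv1, smul_eq_mul, mul_one]
        have hrank1 : Module.finrank (ZMod 2) ↥(LinearMap.range (β v)) = 1 := by
          rw [LinearMap.range_eq_top.mpr hsurj, finrank_top, Module.finrank_self]
        have hfW : 1 + Module.finrank (ZMod 2) W = Module.finrank (ZMod 2) V := by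
          have := LinearMap.finrank_range_add_finrank_ker (β v)
          rw [hrank1] at this
          exact this
        -- kernels correspond
        have hle : LinearMap.ker β ≤ W := by
          intro z hz
          have hz' : β z = 0 := hz
          show β v z = 0
          rw [hs, hz']; rfl
        have hker : LinearMap.ker β' = Submodule.comap W.subtype (LinearMap.ker β) := by
          ext z
          simp only [LinearMap.mem_ker, Submodule.mem_comap, Submodule.coe_subtype]
          constructor
          · intro h
            refine LinearMap.ext fun y => ?_
            show β (z : V) y = 0
            have hzv : β (z : V) v = 0 := by rw [hs]; exact z.2
            have hzW : ∀ (w : V) (hw : w ∈ W), β (z : V) w = 0 := by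
              intro w hw
              have h0 : β' z ⟨w, hw⟩ = 0 := by rw [h]; rfl
              exact h0
            have hyW : y + (β v y) • v ∈ W := by
              show β v (y + (β v y) • v) = 0
              rw [map_add, map_smul, hv1, smul_eq_mul, mul_one, zmod2_add_self]
            have := hzW _ hyW
            rw [map_add, map_smul, hzv, smul_zero, add_zero] at this
            exact this
          · intro h
            refine LinearMap.ext fun y => ?_
            show β (z : V) (y : V) = 0
            rw [h]; rfl
        have hkk : Module.finrank (ZMod 2) (LinearMap.ker β')
            = Module.finrank (ZMod 2) (LinearMap.ker β) := by
          rw [hker]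
          exact LinearEquiv.finrank_eq (Submodule.comapSubtypeEquivOfLe hle)
        -- apply IH
        have hWn : Module.finrank (ZMod 2) W ≤ n := by omega
        have key := ih W hWn β' hs' c' hc'
        rw [hkk] at key
        have hb : β' c' c' = β c c + 1 := by
          show β (c + v) (c + v) = β c c + 1
          rw [map_add]
          simp only [LinearMap.add_apply, map_add]
          rw [hcv, hvc, hv1]
          rcases zmod2_cases (β c c) with h | h <;> rw [h] <;> decide
        rw [hb] at key
        have hkle : Module.finrank (ZMod 2) (LinearMap.ker β)
            ≤ Module.finrank (ZMod 2) W := by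
          rw [← hkk]; exact Submodule.finrank_le _
        have hsub : Module.finrank (ZMod 2) V - Module.finrank (ZMod 2) (LinearMap.ker β)
            = (Module.finrank (ZMod 2) W - Module.finrank (ZMod 2) (LinearMap.ker β)) + 1 := by
          omega
        rw [hsub, Nat.even_add_one, key]
        rcases zmod2_cases (β c c) with h | h <;> rw [h] <;> decide
      · -- Case B: alternating
        push_neg at hA
        have hcc : β c c = 0 := hA c
        refine iff_of_true ?_ hcc
        -- find a hyperbolic pair
        have hu : ∃ u : V, β u ≠ 0 := by
          by_contra h
          push_neg at h
          exact hβ (LinearMap.ext fun x => h x)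
        obtain ⟨u, hu⟩ := hu
        have hw : ∃ w : V, β u w ≠ 0 := by
          by_contra h
          push_neg at h
          exact hu (LinearMap.ext fun x => h x)
        obtain ⟨w, hw⟩ := hw
        have huw : β u w = 1 := (zmod2_cases _).resolve_left hw
        have hwu : β w u = 1 := by rw [hs]; exact huw
        set W : Submodule (ZMod 2) V := LinearMap.ker (β u) ⊓ LinearMap.ker (β w) with hWdef
        set β' : W →ₗ[ZMod 2] W →ₗ[ZMod 2] ZMod 2 :=
          β.compl₁₂ W.subtype W.subtype with hβ'
        have hs' : ∀ x y : W, β' x y = β' y x := fun x y => hs _ _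
        have hc' : ∀ x : W, β' x (x + 0) = 0 := by
          intro x
          rw [add_zero]
          exact hA (x : V)
        -- finrank W = finrank V - 2
        set g : V →ₗ[ZMod 2] (ZMod 2) × (ZMod 2) := (β u).prod (β w) with hg
        have hgker : LinearMap.ker g = W := LinearMap.ker_prod _ _
        have hgsurj : Function.Surjective g := by
          rintro ⟨a, b⟩
          refine ⟨b • u + a • w, ?_⟩
          show (β u (b • u + a • w), β w (b • u + a • w)) = (a, b)
          rw [map_add, map_add, map_smul, map_smul, map_smul, map_smul, hA u, hA w,
            huw, hwu, smul_zero, smul_zero, smul_eq_mul, smul_eq_mul, mul_one, mul_one,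
            zero_add, add_zero]
        have hrank2 : Module.finrank (ZMod 2) ↥(LinearMap.range g) = 2 := by
          rw [LinearMap.range_eq_top.mpr hgsurj, finrank_top, Module.finrank_prod,
            Module.finrank_self]
        have hfW : 2 + Module.finrank (ZMod 2) W = Module.finrank (ZMod 2) V := by
          have := LinearMap.finrank_range_add_finrank_ker g
          rw [hrank2, hgker] at this
          exact this
        -- kernels correspond
        have hle : LinearMap.ker β ≤ W := by
          intro z hz
          have hz' : β z = 0 := hz
          constructor
          · show β u z = 0
            rw [hs, hz']; rfl
          · show β w z = 0
            rw [hs, hz']; rfl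
        have hker : LinearMap.ker β' = Submodule.comap W.subtype (LinearMap.ker β) := by
          ext z
          simp only [LinearMap.mem_ker, Submodule.mem_comap, Submodule.coe_subtype]
          constructor
          · intro h
            refine LinearMap.ext fun y => ?_
            show β (z : V) y = 0
            have hzu : β (z : V) u = 0 := by rw [hs]; exact z.2.1
            have hzw : β (z : V) w = 0 := by rw [hs]; exact z.2.2
            have hzW : ∀ (x : V) (hx : x ∈ W), β (z : V) x = 0 := by
              intro x hx
              have h0 : β' z ⟨x, hx⟩ = 0 := by rw [h]; rfl
              exact h0
            have hyW : y + (β u y) • w + (β w y) • u ∈ W := by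
              constructor
              · show β u (y + (β u y) • w + (β w y) • u) = 0
                rw [map_add, map_add, map_smul, map_smul, huw, hA u, smul_zero,
                  add_zero, smul_eq_mul, mul_one, zmod2_add_self]
              · show β w (y + (β u y) • w + (β w y) • u) = 0
                rw [map_add, map_add, map_smul, map_smul, hA w, hwu, smul_zero,
                  add_zero, smul_eq_mul, mul_one, zmod2_add_self]
            have := hzW _ hyW
            rw [map_add, map_add, map_smul, map_smul, hzu, hzw, smul_zero, smul_zero,
              add_zero, add_zero] at this
            exact this
          · intro h
            refine LinearMap.ext fun y => ?_
            show β (z : V) (y : V) = 0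
            rw [h]; rfl
        have hkk : Module.finrank (ZMod 2) (LinearMap.ker β')
            = Module.finrank (ZMod 2) (LinearMap.ker β) := by
          rw [hker]
          exact LinearEquiv.finrank_eq (Submodule.comapSubtypeEquivOfLe hle)
        have hWn : Module.finrank (ZMod 2) W ≤ n := by omega
        have key := ih W hWn β' hs' 0 hc'
        rw [hkk] at key
        have hkey : Even (Module.finrank (ZMod 2) W
            - Module.finrank (ZMod 2) (LinearMap.ker β)) := key.mpr (by simp)
        have hkle : Module.finrank (ZMod 2) (LinearMap.ker β)
            ≤ Module.finrank (ZMod 2) W := by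
          rw [← hkk]; exact Submodule.finrank_le _
        have hsub : Module.finrank (ZMod 2) V - Module.finrank (ZMod 2) (LinearMap.ker β)
            = (Module.finrank (ZMod 2) W - Module.finrank (ZMod 2) (LinearMap.ker β)) + 2 := by
          omega
        rw [hsub]
        exact hkey.add (by decide)

/-- Lemma 3.1(iii) (linear-algebra content): for a symmetric bilinear form `β`
on a finite-dimensional `𝔽₂`-vector space with `β(x, x + c) = 0` for all `x`,
the rank of `β` is even if and only if `β(c, c) = 0`. -/
theorem stmt_15 (V : Type*) [AddCommGroup V] [Module (ZMod 2) V]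
    [FiniteDimensional (ZMod 2) V]
    (β : V →ₗ[ZMod 2] V →ₗ[ZMod 2] ZMod 2)
    (hsymm : ∀ x y : V, β x y = β y x)
    (c : V) (hc : ∀ x : V, β x (x + c) = 0) :
    Even (Module.finrank (ZMod 2) V - Module.finrank (ZMod 2) (LinearMap.ker β)) ↔
      β c c = 0 := by
  exact stmt15_aux (Module.finrank (ZMod 2) V) V le_rfl β hsymm c hc
end

section
/- Let R be a commutative ring and let a₁, a₂, a₃, m₁, m₂, m₃, r, c be units of R satisfying a₁a₂a₃ = r³c² and m₁m₂m₃ = r³cd for some d ∈ R. Set bᵢ = mᵢ²/aᵢ and μ = c·∏_{i=1}^{3}(1 + mᵢ/aᵢ). Then ∏_{i=1}^{3}(aᵢ + bᵢ + 2mᵢ) = r³μ², and moreover μ = d·∏_{i=1}^{3}(1 + mᵢ/bᵢ) = d·∏_{i=1}^{3}(1 + aᵢ/mᵢ). -/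
/-- Lemma 4.15 (componentwise form): if `a₁a₂a₃ = r³c²` and `m₁m₂m₃ = r³cd`,
with `bᵢ = mᵢ²/aᵢ` and `μ = c·∏(1 + mᵢ/aᵢ)`, then
`∏(aᵢ + bᵢ + 2mᵢ) = r³μ²` and `μ = d·∏(1 + mᵢ/bᵢ) = d·∏(1 + aᵢ/mᵢ)`. -/
theorem stmt_16 (R : Type*) [CommRing R] (a m ia im : Fin 3 → R) (r c d : R)
    (hr : IsUnit r) (hc : IsUnit c)
    (ha : ∀ i, a i * ia i = 1) (hm : ∀ i, m i * im i = 1)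
    (h1 : a 0 * a 1 * a 2 = r ^ 3 * c ^ 2)
    (h2 : m 0 * m 1 * m 2 = r ^ 3 * c * d) :
    (∏ i : Fin 3, (a i + m i ^ 2 * ia i + 2 * m i))
        = r ^ 3 * (c * ∏ i : Fin 3, (1 + m i * ia i)) ^ 2 ∧
    c * ∏ i : Fin 3, (1 + m i * ia i)
        = d * ∏ i : Fin 3, (1 + m i * (a i * im i * im i)) ∧
    c * ∏ i : Fin 3, (1 + m i * ia i)
        = d * ∏ i : Fin 3, (1 + a i * im i) := by
  have key1 : ∀ i, a i + m i ^ 2 * ia i + 2 * m i = a i * (1 + m i * ia i) ^ 2 := by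
    intro i
    linear_combination (-(2 * m i) - m i ^ 2 * ia i) * ha i
  have key2 : ∀ i, a i * (1 + m i * ia i) = a i + m i := by
    intro i
    linear_combination m i * ha i
  have key3 : ∀ i, m i * (1 + a i * im i) = m i + a i := by
    intro i
    linear_combination a i * hm i
  have keyeq : ∀ i, (1 : R) + m i * (a i * im i * im i) = 1 + a i * im i := by
    intro i
    linear_combination a i * im i * hm i
  have hu : IsUnit (r ^ 3 * c) := (hr.pow 3).mul hc
  have third : c * ∏ i : Fin 3, (1 + m i * ia i)
      = d * ∏ i : Fin 3, (1 + a i * im i) := by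
    apply hu.mul_left_cancel
    simp only [Fin.prod_univ_three]
    calc r ^ 3 * c * (c * ((1 + m 0 * ia 0) * (1 + m 1 * ia 1) * (1 + m 2 * ia 2)))
        = (a 0 * (1 + m 0 * ia 0)) * (a 1 * (1 + m 1 * ia 1)) * (a 2 * (1 + m 2 * ia 2)) := by
          linear_combination (-((1 + m 0 * ia 0) * (1 + m 1 * ia 1) * (1 + m 2 * ia 2))) * h1
      _ = (m 0 * (1 + a 0 * im 0)) * (m 1 * (1 + a 1 * im 1)) * (m 2 * (1 + a 2 * im 2)) := by
          rw [key2 0, key2 1, key2 2, key3 0, key3 1, key3 2]; ring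
      _ = r ^ 3 * c * (d * ((1 + a 0 * im 0) * (1 + a 1 * im 1) * (1 + a 2 * im 2))) := by
          linear_combination (1 + a 0 * im 0) * (1 + a 1 * im 1) * (1 + a 2 * im 2) * h2
  refine ⟨?_, ?_, third⟩
  · simp only [Fin.prod_univ_three, key1]
    linear_combination ((1 + m 0 * ia 0) * (1 + m 1 * ia 1) * (1 + m 2 * ia 2)) ^ 2 * h1
  · simp only [keyeq]
    exact third
end
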